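/- arXiv:2505.10964 — 5 statements merged into one kernel-verified Lean document; each statement's English description precedes it below -/
import Mathlib

section
/- Let D be a bounded proper subdomain of ℝⁿ, n ≥ 2. Then for all z₁, z₂ ∈ D, k_D(z₁, z₂) ≤ m_D(z₁, z₂) ≤ 2·k_D(z₁, z₂); that is, the metric m_D is 2-bi-Lipschitz equivalent to the quasihyperbolic metric k_D. -/
open Metric Set MeasureTheory intervalIntegral

variable {E : Type*} [NormedAddCommGroup E] [NormedSpace ℝ E]

/-- δ_D(z): the Euclidean distance from `z` to the boundary `∂D`. -/
noncomputable def bdist (D : Set E) (z : E) : ℝ := Metric.infDist z (frontier D)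

/-- The m-density `m_D(z) = d(D) / (δ_D(z)·(d(D) − δ_D(z)))`. -/
noncomputable def mDensity (D : Set E) (z : E) : ℝ :=
  Metric.diam D / (bdist D z * (Metric.diam D - bdist D z))

/-- A rectifiable path in `D` from `x` to `y`, modeled as a Lipschitz map on `[0,1]`. -/
def IsRectPathIn (D : Set E) (x y : E) (γ : ℝ → E) : Prop :=
  (∃ K : NNReal, LipschitzWith K γ) ∧ γ 0 = x ∧ γ 1 = y ∧ ∀ t ∈ Set.Icc (0:ℝ) 1, γ t ∈ D

/-- The line integral `∫_γ ρ(z) |dz|` of a density `ρ` along a path `γ`. -/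
noncomputable def pathIntegral (ρ : E → ℝ) (γ : ℝ → E) : ℝ :=
  ∫ t in (0:ℝ)..1, ρ (γ t) * ‖deriv γ t‖

/-- `inf_γ ∫_γ ρ(z)|dz|` over all rectifiable paths `γ` joining `x` and `y` in `D`. -/
noncomputable def pathDist (ρ : E → ℝ) (D : Set E) (x y : E) : ℝ :=
  sInf (pathIntegral ρ '' {γ | IsRectPathIn D x y γ})

/-- The metric `m_D`. -/
noncomputable def mDist (D : Set E) (x y : E) : ℝ := pathDist (mDensity D) D x y

/-- The quasihyperbolic metric `k_D`. -/
noncomputable def kDist (D : Set E) (x y : E) : ℝ :=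
  pathDist (fun z => 1 / bdist D z) D x y

section Aux

variable [FiniteDimensional ℝ E] [Nontrivial E]

lemma bdist_facts {D : Set E} (hDopen : IsOpen D) (hDbdd : Bornology.IsBounded D)
    (hDne : D.Nonempty) (hproper : D ≠ Set.univ) {z : E} (hz : z ∈ D) :
    0 < bdist D z ∧ 2 * bdist D z ≤ Metric.diam D := by
  have hfr : (frontier D).Nonempty := nonempty_frontier_iff.mpr ⟨hDne, hproper⟩
  have hzfr : z ∉ frontier D := by
    rw [hDopen.frontier_eq]; exact fun h => h.2 hz
  have hpos : 0 < bdist D z :=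
    (isClosed_frontier.notMem_iff_infDist_pos hfr).mp hzfr
  have heq : bdist D z = infDist z Dᶜ := by
    refine le_antisymm ?_ ?_
    · obtain ⟨y, hy, he⟩ := exists_mem_frontier_infDist_compl_eq_dist hz hproper
      rw [he]; exact infDist_le_dist_of_mem hy
    · refine infDist_le_infDist_of_subset ?_ hfr
      rw [hDopen.frontier_eq]; exact fun x hx => hx.2
  have hball : ball z (bdist D z) ⊆ D := by
    rw [heq]; exact ball_infDist_compl_subset
  refine ⟨hpos, ?_⟩
  have key : ∀ r : ℝ, 0 ≤ r → r < bdist D z → 2 * r ≤ Metric.diam D := by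
    intro r hr hrδ
    obtain ⟨w, hw⟩ := exists_ne (0 : E)
    set v : E := (r / ‖w‖) • w with hv
    have hnw : (0:ℝ) < ‖w‖ := norm_pos_iff.mpr hw
    have hnv : ‖v‖ = r := by
      rw [hv, norm_smul, Real.norm_eq_abs, abs_div, abs_of_nonneg hr, abs_of_pos hnw,
        div_mul_cancel₀ _ hnw.ne']
    have h1 : z + v ∈ D := hball (by
      simp only [mem_ball, dist_self_add_left]
      rw [hnv]; exact hrδ)
    have h2 : z - v ∈ D := hball (by
      simp only [mem_ball, dist_self_sub_left]
      rw [hnv]; exact hrδ)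
    have hdist : dist (z + v) (z - v) = 2 * r := by
      rw [dist_eq_norm]
      have : z + v - (z - v) = (2:ℝ) • v := by
        rw [two_smul]; abel
      rw [this, norm_smul, Real.norm_eq_abs, hnv]
      norm_num
    calc 2 * r = dist (z + v) (z - v) := hdist.symm
      _ ≤ Metric.diam D := dist_le_diam_of_mem hDbdd h1 h2
  by_contra hcon
  push_neg at hcon
  have hdnn : 0 ≤ Metric.diam D := diam_nonneg
  have h1 : (0:ℝ) ≤ (Metric.diam D / 2 + bdist D z) / 2 := by linarith
  have h2 : (Metric.diam D / 2 + bdist D z) / 2 < bdist D z := by linarith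
  have := key _ h1 h2
  linarith

lemma density_bounds {D : Set E} (hDopen : IsOpen D) (hDbdd : Bornology.IsBounded D)
    (hDne : D.Nonempty) (hproper : D ≠ Set.univ) {z : E} (hz : z ∈ D) :
    1 / bdist D z ≤ mDensity D z ∧ mDensity D z ≤ 2 * (1 / bdist D z) := by
  obtain ⟨hδ, hd⟩ := bdist_facts hDopen hDbdd hDne hproper hz
  set δ := bdist D z with hδdef
  set d := Metric.diam D with hddef
  have h1 : 0 < d - δ := by linarith
  have h2 : 0 < d := by linarith
  unfold mDensity
  rw [← hδdef, ← hddef]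
  constructor
  · rw [div_le_div_iff₀ hδ (by positivity)]
    nlinarith
  · rw [mul_one_div, div_le_div_iff₀ (by positivity) hδ]
    nlinarith

end Aux

lemma integrable_aux [MeasurableSpace E] [BorelSpace E] [CompleteSpace E]
    {γ : ℝ → E} {K : NNReal} (hγ : LipschitzWith K γ) {ρ : E → ℝ} (hρ : Measurable ρ)
    {C : ℝ} (hC : ∀ t ∈ Icc (0:ℝ) 1, |ρ (γ t)| ≤ C) :
    IntervalIntegrable (fun t => ρ (γ t) * ‖deriv γ t‖) volume 0 1 := by
  have hC0 : 0 ≤ C := le_trans (abs_nonneg _) (hC 0 ⟨le_refl _, zero_le_one⟩)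
  have hd : ∀ t, ‖deriv γ t‖ ≤ K := by
    intro t
    rw [← fderiv_apply_one_eq_deriv]
    calc ‖fderiv ℝ γ t 1‖ ≤ ‖fderiv ℝ γ t‖ * ‖(1:ℝ)‖ := (fderiv ℝ γ t).le_opNorm 1
      _ ≤ K := by rw [norm_one, mul_one]; exact norm_fderiv_le_of_lipschitz ℝ hγ
  have hm : Measurable fun t => ρ (γ t) * ‖deriv γ t‖ :=
    (hρ.comp hγ.continuous.measurable).mul (measurable_deriv γ).norm
  rw [intervalIntegrable_iff, uIoc_of_le zero_le_one]
  refine Integrable.mono' (integrable_const (C * K)) hm.aestronglyMeasurable ?_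
  rw [ae_restrict_iff' measurableSet_Ioc]
  refine ae_of_all _ fun t ht => ?_
  rw [Real.norm_eq_abs, abs_mul, abs_norm]
  exact mul_le_mul (hC t (Ioc_subset_Icc_self ht)) (hd t) (norm_nonneg _) hC0

/-- Theorem: $m_D$ is 2-bi-Lipschitz equivalent to the
quasihyperbolic metric. For a bounded proper subdomain $D ⊂ ℝ^n$, $n ≥ 2$, and all
$z_1, z_2 ∈ D$: $k_D(z_1,z_2) ≤ m_D(z_1,z_2) ≤ 2 k_D(z_1,z_2)$. -/
theorem mDist_biLipschitz_kDist {n : ℕ} (hn : 2 ≤ n)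
    (D : Set (EuclideanSpace ℝ (Fin n)))
    (hDopen : IsOpen D) (hDconn : IsConnected D)
    (hDbdd : Bornology.IsBounded D) (hDproper : D ≠ Set.univ)
    (z₁ z₂ : EuclideanSpace ℝ (Fin n)) (hz₁ : z₁ ∈ D) (hz₂ : z₂ ∈ D) :
    kDist D z₁ z₂ ≤ mDist D z₁ z₂ ∧ mDist D z₁ z₂ ≤ 2 * kDist D z₁ z₂ := by
  haveI : Nontrivial (EuclideanSpace ℝ (Fin n)) := by
    refine ⟨⟨EuclideanSpace.single (⟨0, by omega⟩ : Fin n) (1:ℝ), 0, ?_⟩⟩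
    intro h
    have := congrArg (fun v : EuclideanSpace ℝ (Fin n) => v (⟨0, by omega⟩ : Fin n)) h
    simp [EuclideanSpace.single] at this
  have hDne : D.Nonempty := ⟨z₁, hz₁⟩
  set S : Set (ℝ → EuclideanSpace ℝ (Fin n)) := {γ | IsRectPathIn D z₁ z₂ γ} with hS
  -- pointwise density bounds
  have hdb := fun {z} (hz : z ∈ D) => density_bounds hDopen hDbdd hDne hDproper hz
  have hbpos := fun {z} (hz : z ∈ D) =>
    (bdist_facts hDopen hDbdd hDne hDproper hz).1
  -- per-path comparison and nonnegativity
  have hcomp : ∀ γ ∈ S,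
      0 ≤ pathIntegral (fun z => 1 / bdist D z) γ ∧
      pathIntegral (fun z => 1 / bdist D z) γ ≤ pathIntegral (mDensity D) γ ∧
      pathIntegral (mDensity D) γ ≤ 2 * pathIntegral (fun z => 1 / bdist D z) γ := by
    rintro γ ⟨⟨K, hK⟩, h0, h1, hmem⟩
    -- a uniform positive lower bound on bdist along γ
    have hcont : ContinuousOn (fun t => bdist D (γ t)) (Icc (0:ℝ) 1) :=
      ((continuous_infDist_pt (frontier D)).comp hK.continuous).continuousOn
    obtain ⟨t₀, ht₀, hmin⟩ :=
      isCompact_Icc.exists_isMinOn (nonempty_Icc.mpr zero_le_one) hcont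
    set ε := bdist D (γ t₀) with hε
    have hεpos : 0 < ε := hbpos (hmem t₀ ht₀)
    have hεle : ∀ t ∈ Icc (0:ℝ) 1, ε ≤ bdist D (γ t) := fun t ht => hmin ht
    -- C-bounds for the two densities along γ
    have hKb : ∀ t ∈ Icc (0:ℝ) 1, |(1:ℝ) / bdist D (γ t)| ≤ 1 / ε := by
      intro t ht
      have hb := hbpos (hmem t ht)
      rw [abs_of_nonneg (by positivity)]
      exact one_div_le_one_div_of_le hεpos (hεle t ht)
    have hMb : ∀ t ∈ Icc (0:ℝ) 1, |mDensity D (γ t)| ≤ 2 * (1 / ε) := by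
      intro t ht
      obtain ⟨hlo, hhi⟩ := hdb (hmem t ht)
      have hb := hbpos (hmem t ht)
      have hnn : 0 ≤ mDensity D (γ t) := le_trans (by positivity) hlo
      rw [abs_of_nonneg hnn]
      refine le_trans hhi ?_
      have := one_div_le_one_div_of_le hεpos (hεle t ht)
      linarith
    -- measurability of densities
    have hmb : Measurable fun z : EuclideanSpace ℝ (Fin n) => bdist D z :=
      (continuous_infDist_pt (frontier D)).measurable
    have hmesK : Measurable fun z : EuclideanSpace ℝ (Fin n) => 1 / bdist D z :=
      measurable_const.div hmb
    have hmesM : Measurable (mDensity D) := by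
      unfold mDensity
      exact measurable_const.div (hmb.mul (measurable_const.sub hmb))
    have hintK := integrable_aux hK hmesK hKb
    have hintM := integrable_aux hK hmesM hMb
    refine ⟨?_, ?_, ?_⟩
    · refine integral_nonneg zero_le_one fun t ht => ?_
      have hb := hbpos (hmem t ht)
      positivity
    · refine integral_mono_on zero_le_one hintK hintM fun t ht => ?_
      exact mul_le_mul_of_nonneg_right (hdb (hmem t ht)).1 (norm_nonneg _)
    · unfold pathIntegral
      rw [← intervalIntegral.integral_const_mul]
      refine integral_mono_on zero_le_one hintM (hintK.const_mul 2) fun t ht => ?_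
      have := mul_le_mul_of_nonneg_right (hdb (hmem t ht)).2
        (norm_nonneg (deriv γ t))
      linarith [this]
  -- the two infima
  rcases eq_empty_or_nonempty S with hSe | hSne
  · have hm : mDist D z₁ z₂ = 0 := by
      rw [mDist, pathDist, ← hS, hSe, image_empty, Real.sInf_empty]
    have hk : kDist D z₁ z₂ = 0 := by
      rw [kDist, pathDist, ← hS, hSe, image_empty, Real.sInf_empty]
    rw [hm, hk]; norm_num
  · have hbddK : BddBelow (pathIntegral (fun z => 1 / bdist D z) '' S) := by
      refine ⟨0, ?_⟩
      rintro b ⟨γ, hγ, rfl⟩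
      exact (hcomp γ hγ).1
    have hbddM : BddBelow (pathIntegral (mDensity D) '' S) := by
      refine ⟨0, ?_⟩
      rintro b ⟨γ, hγ, rfl⟩
      exact le_trans (hcomp γ hγ).1 (hcomp γ hγ).2.1
    constructor
    · rw [kDist, mDist, pathDist, pathDist, ← hS]
      refine le_csInf (hSne.image _) ?_
      rintro b ⟨γ, hγ, rfl⟩
      exact le_trans (csInf_le hbddK ⟨γ, hγ, rfl⟩) (hcomp γ hγ).2.1
    · have hhalf : mDist D z₁ z₂ / 2 ≤ kDist D z₁ z₂ := by
        rw [kDist, pathDist, ← hS]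
        refine le_csInf (hSne.image _) ?_
        rintro b ⟨γ, hγ, rfl⟩
        have h1 : mDist D z₁ z₂ ≤ pathIntegral (mDensity D) γ := by
          rw [mDist, pathDist, ← hS]
          exact csInf_le hbddM ⟨γ, hγ, rfl⟩
        have h2 := (hcomp γ hγ).2.2
        linarith
      linarith
end

section
/- Let D₁ and D₂ be bounded proper subdomains of ℂ, and let f(z) = (az + b)/(cz + d) with a, b, c, d ∈ ℂ and ad − bc ≠ 0 be a Möbius transformation mapping D₁ onto D₂ (with the pole of f outside the closure of D₁). Then for every z ∈ D₁, m_{D₁}(z) ≤ 4·|f'(z)|·m_{D₂}(f(z)). -/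
open Metric Set

variable {E : Type*} [NormedAddCommGroup E] [NormedSpace ℝ E]

lemma exists_frontier_segment {D : Set ℂ} {x y : ℂ} (hx : x ∈ D) (hy : y ∉ D) :
    ∃ w ∈ segment ℝ x y, w ∈ frontier D := by
  by_contra h
  push_neg at h
  have hpre : IsPreconnected (segment ℝ x y) := (convex_segment x y).isPreconnected
  have hsub : segment ℝ x y ⊆ interior D ∪ (closure D)ᶜ := by
    intro w hw
    by_cases hcl : w ∈ closure D
    · by_cases hint : w ∈ interior D
      · exact Or.inl hint
      · exact absurd ⟨hcl, hint⟩ (h w hw)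
    · exact Or.inr hcl
  obtain ⟨w, -, hw1, hw2⟩ := hpre _ _ isOpen_interior isClosed_closure.isOpen_compl hsub
    ⟨x, left_mem_segment _ _ _, by
      by_cases hint : x ∈ interior D
      exacts [hint, absurd ⟨subset_closure hx, hint⟩ (h x (left_mem_segment _ _ _))]⟩
    ⟨y, right_mem_segment _ _ _, fun hc => by
      by_cases hint : y ∈ interior D
      exacts [hy (interior_subset hint), absurd ⟨hc, hint⟩ (h y (right_mem_segment _ _ _))]⟩
  exact hw2 (subset_closure (interior_subset hw1))

lemma frontier_nonempty_of_proper {D : Set ℂ} (hne : D.Nonempty) (hproper : D ≠ Set.univ) :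
    (frontier D).Nonempty :=
  nonempty_frontier_iff.mpr ⟨hne, hproper⟩

lemma bdist_pos_of_mem {D : Set ℂ} (hop : IsOpen D) (hfr : (frontier D).Nonempty)
    {z : ℂ} (hz : z ∈ D) : 0 < bdist D z := by
  rw [bdist, ← isClosed_frontier.notMem_iff_infDist_pos hfr]
  intro h
  exact h.2 (by rwa [hop.interior_eq])

lemma ball_bdist_subset {D : Set ℂ} (hop : IsOpen D) {z : ℂ} (hz : z ∈ D) :
    Metric.ball z (bdist D z) ⊆ D := by
  intro y hy
  by_contra hyD
  obtain ⟨w, hwseg, hwfr⟩ := exists_frontier_segment hz hyD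
  have hzball : z ∈ Metric.ball z (bdist D z) := by
    rw [Metric.mem_ball, dist_self]
    exact lt_of_le_of_lt dist_nonneg (Metric.mem_ball.mp hy) |>.trans_le le_rfl |>.trans_le le_rfl
  have : w ∈ Metric.ball z (bdist D z) :=
    (convex_ball z (bdist D z)).segment_subset hzball hy hwseg
  exact absurd (Metric.infDist_le_dist_of_mem hwfr) (by
    rw [Metric.mem_ball, dist_comm] at this
    exact not_le.mpr this)

lemma two_bdist_le_diam {D : Set ℂ} (hop : IsOpen D) (hbdd : Bornology.IsBounded D)
    {z : ℂ} (hz : z ∈ D) : 2 * bdist D z ≤ Metric.diam D := by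
  set δ := bdist D z with hδ
  rcases le_or_gt δ 0 with h | h
  · linarith [Metric.diam_nonneg (s := D)]
  · refine le_of_forall_pos_le_add fun ε hε => ?_
    rcases le_or_gt δ (ε/2) with h2 | h2
    · linarith [Metric.diam_nonneg (s := D)]
    have r : ℝ := δ - ε/2
    have h1 : z + (↑(δ - ε/2) : ℂ) ∈ D := by
      apply ball_bdist_subset hop hz
      rw [Metric.mem_ball, dist_eq_norm]
      simp only [add_sub_cancel_left]
      rw [Complex.norm_real, Real.norm_eq_abs, abs_of_pos (by linarith)]
      linarith
    have h1' : z - (↑(δ - ε/2) : ℂ) ∈ D := by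
      apply ball_bdist_subset hop hz
      rw [Metric.mem_ball, dist_eq_norm]
      simp only [sub_sub_cancel_left]
      rw [norm_neg, Complex.norm_real, Real.norm_eq_abs, abs_of_pos (by linarith)]
      linarith
    have := Metric.dist_le_diam_of_mem hbdd h1 h1'
    rw [dist_eq_norm] at this
    have he : z + (↑(δ - ε/2) : ℂ) - (z - (↑(δ - ε/2) : ℂ)) = ((2*(δ - ε/2) : ℝ) : ℂ) := by
      push_cast; ring
    rw [he, Complex.norm_real, Real.norm_eq_abs, abs_of_pos (by linarith)] at this
    linarith

lemma mDensity_le_two_div {D : Set ℂ} (hop : IsOpen D) (hbdd : Bornology.IsBounded D)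
    (hfr : (frontier D).Nonempty) {z : ℂ} (hz : z ∈ D) :
    mDensity D z ≤ 2 / bdist D z := by
  have hδ : 0 < bdist D z := bdist_pos_of_mem hop hfr hz
  have hd : 2 * bdist D z ≤ Metric.diam D := two_bdist_le_diam hop hbdd hz
  rw [mDensity]
  rw [div_le_div_iff₀ (by nlinarith) hδ]
  nlinarith

lemma one_div_le_mDensity {D : Set ℂ} (hop : IsOpen D) (hbdd : Bornology.IsBounded D)
    (hfr : (frontier D).Nonempty) {z : ℂ} (hz : z ∈ D) :
    1 / bdist D z ≤ mDensity D z := by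
  have hδ : 0 < bdist D z := bdist_pos_of_mem hop hfr hz
  have hd : 2 * bdist D z ≤ Metric.diam D := two_bdist_le_diam hop hbdd hz
  rw [mDensity, div_le_div_iff₀ hδ (by nlinarith)]
  nlinarith

/-- Corollary: Möbius quasi-invariance of the m-density.
If $f(z) = (az+b)/(cz+d)$, $ad − bc ≠ 0$, maps a bounded proper subdomain
$D_1 ⊂ ℂ$ onto $D_2$ (pole outside the closure of $D_1$), then
$m_{D_1}(z) ≤ 4 |f'(z)| m_{D_2}(f(z))$ for all $z ∈ D_1$. -/
theorem mDensity_moebius (D₁ D₂ : Set ℂ)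
    (hD₁open : IsOpen D₁) (hD₁conn : IsConnected D₁)
    (hD₁bdd : Bornology.IsBounded D₁) (hD₁proper : D₁ ≠ Set.univ)
    (hD₂open : IsOpen D₂) (hD₂conn : IsConnected D₂)
    (hD₂bdd : Bornology.IsBounded D₂) (hD₂proper : D₂ ≠ Set.univ)
    (a b c d : ℂ) (habcd : a * d - b * c ≠ 0)
    (f : ℂ → ℂ) (hf : ∀ z : ℂ, f z = (a * z + b) / (c * z + d))
    (hpole : ∀ z ∈ closure D₁, c * z + d ≠ 0)
    (hmaps : f '' D₁ = D₂)
    (z : ℂ) (hz : z ∈ D₁) :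
    mDensity D₁ z ≤ 4 * ‖deriv f z‖ * mDensity D₂ (f z) := by
  have hczd : c * z + d ≠ 0 := hpole z (subset_closure hz)
  have hfeq : f = fun w => (a * w + b) / (c * w + d) := funext hf
  -- derivative
  have hder : HasDerivAt f ((a * d - b * c) / (c * z + d) ^ 2) z := by
    rw [hfeq]
    have h1 : HasDerivAt (fun w : ℂ => a * w + b) a z := by
      simpa using ((hasDerivAt_id z).const_mul a).add_const b
    have h2 : HasDerivAt (fun w : ℂ => c * w + d) c z := by
      simpa using ((hasDerivAt_id z).const_mul c).add_const d
    have := h1.div h2 hczd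
    exact this.congr_deriv (by ring)
  have hderiv : deriv f z = (a * d - b * c) / (c * z + d) ^ 2 := hder.deriv
  have hnd : ‖deriv f z‖ = ‖a * d - b * c‖ / ‖c * z + d‖ ^ 2 := by
    rw [hderiv, norm_div, norm_pow]
  -- frontier maps to frontier
  have hcont : ContinuousOn f (closure D₁) := by
    rw [hfeq]
    exact ContinuousOn.div (by fun_prop) (by fun_prop) (fun w hw => hpole w hw)
  have hfmap : ∀ ζ ∈ frontier D₁, f ζ ∈ frontier D₂ := by
    intro ζ hζ
    have hζcl : ζ ∈ closure D₁ := frontier_subset_closure hζ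
    have hcζ : c * ζ + d ≠ 0 := hpole ζ hζcl
    have h1 : f ζ ∈ closure D₂ := by
      have h := hcont.image_closure
      rw [hmaps] at h
      exact h ⟨ζ, hζcl, rfl⟩
    have h2 : f ζ ∉ D₂ := by
      intro hmem
      rw [← hmaps] at hmem
      obtain ⟨w, hwD, hwe⟩ := hmem
      have hcw : c * w + d ≠ 0 := hpole w (subset_closure hwD)
      rw [hf, hf, div_eq_div_iff hcw hcζ] at hwe
      have hwζ : w = ζ := by
        have h0 : (a * d - b * c) * (w - ζ) = 0 := by linear_combination hwe
        rcases mul_eq_zero.mp h0 with h | h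
        · exact absurd h habcd
        · exact sub_eq_zero.mp h
      rw [hD₁open.frontier_eq] at hζ
      exact hζ.2 (hwζ ▸ hwD)
    rw [hD₂open.frontier_eq]
    exact ⟨h1, h2⟩
  -- difference formula
  have hdiff : ∀ ζ ∈ frontier D₁, dist (f z) (f ζ)
      = ‖a * d - b * c‖ * dist z ζ / (‖c * z + d‖ * ‖c * ζ + d‖) := by
    intro ζ hζ
    have hcζ : c * ζ + d ≠ 0 := hpole ζ (frontier_subset_closure hζ)
    rw [dist_eq_norm, hf, hf]
    have he : (a * z + b) / (c * z + d) - (a * ζ + b) / (c * ζ + d)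
        = (a * d - b * c) * (z - ζ) / ((c * z + d) * (c * ζ + d)) := by
      rw [div_sub_div _ _ hczd hcζ]
      ring
    rw [he, norm_div, norm_mul, norm_mul, dist_eq_norm]
  have hfr1 : (frontier D₁).Nonempty := nonempty_frontier_iff.mpr ⟨hD₁conn.nonempty, hD₁proper⟩
  have hδ₁ : 0 < bdist D₁ z := by
    rw [bdist, ← isClosed_frontier.notMem_iff_infDist_pos hfr1]
    intro h
    exact h.2 (by rwa [hD₁open.interior_eq])
  set δ₁ := bdist D₁ z with hδ₁def
  -- key: choice of boundary point
  have hkey : ∃ ζ ∈ frontier D₁, dist z ζ * ‖c * z + d‖ ≤ 2 * δ₁ * ‖c * ζ + d‖ := by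
    have hcpt : IsCompact (frontier D₁) :=
      Metric.isCompact_of_isClosed_isBounded isClosed_frontier
        (hD₁bdd.closure.subset frontier_subset_closure)
    by_cases hc : c = 0
    · obtain ⟨ζ, hζ, he⟩ := hcpt.exists_infDist_eq_dist hfr1 z
      refine ⟨ζ, hζ, ?_⟩
      have hdd : dist z ζ = δ₁ := he.symm
      rw [hc]
      simp only [zero_mul, zero_add]
      rw [hdd]
      nlinarith [norm_nonneg d, hδ₁]
    · set p : ℂ := -d / c with hpdef
      have hcp : c * p + d = 0 := by rw [hpdef]; field_simp; ring
      have hpcl : p ∉ closure D₁ := fun h => hpole p h hcp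
      have hfac : ∀ w : ℂ, ‖c * w + d‖ = ‖c‖ * ‖w - p‖ := by
        intro w
        rw [← norm_mul]
        congr 1
        linear_combination hcp
      have hzp : z ≠ p := fun h => hpcl (h ▸ subset_closure hz)
      set σ := ‖z - p‖ with hσdef
      have hσ : 0 < σ := norm_pos_iff.mpr (sub_ne_zero.mpr hzp)
      have hcpos : 0 < ‖c‖ := norm_pos_iff.mpr hc
      rcases le_or_gt (2 * δ₁) σ with hcase | hcase
      · obtain ⟨ζ, hζ, he⟩ := hcpt.exists_infDist_eq_dist hfr1 z
        refine ⟨ζ, hζ, ?_⟩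
        have hdd : dist z ζ = δ₁ := he.symm
        have htri : σ ≤ ‖z - ζ‖ + ‖ζ - p‖ := by
          calc σ = ‖(z - ζ) + (ζ - p)‖ := by rw [hσdef]; ring_nf
          _ ≤ ‖z - ζ‖ + ‖ζ - p‖ := norm_add_le _ _
        rw [← dist_eq_norm] at htri
        rw [hfac, hfac, hdd]
        nlinarith [mul_nonneg (mul_nonneg hδ₁.le hcpos.le)
          (by linarith : (0:ℝ) ≤ 2 * ‖ζ - p‖ - σ)]
      · -- ray case
        set u : ℂ := (z - p) / (σ : ℂ) with hudef
        have hσc : (σ : ℂ) ≠ 0 := by exact_mod_cast hσ.ne'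
        have hzpu : (σ : ℂ) * u = z - p := by rw [hudef]; field_simp
        have hnu : ‖u‖ = 1 := by
          rw [hudef, norm_div, Complex.norm_real, Real.norm_eq_abs, abs_of_pos hσ, ← hσdef,
            div_self hσ.ne']
        set T := Metric.diam D₁ + 1 with hTdef
        have hT : 0 < T := by positivity
        have hy : z + (T : ℂ) * u ∉ D₁ := by
          intro h
          have := Metric.dist_le_diam_of_mem hD₁bdd hz h
          rw [dist_eq_norm] at this
          have he : z - (z + (T : ℂ) * u) = -((T : ℂ) * u) := by ring
          rw [he, norm_neg, norm_mul, hnu, mul_one, Complex.norm_real, Real.norm_eq_abs,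
            abs_of_pos hT] at this
          linarith
        obtain ⟨w, hwseg, hwfr⟩ := exists_frontier_segment hz hy
        obtain ⟨s, t, hs, ht, hst, hw⟩ := hwseg
        refine ⟨w, hwfr, ?_⟩
        have hwz : w - z = ((t * T : ℝ) : ℂ) * u := by
          rw [← hw]
          have hs1 : s = 1 - t := by linarith
          rw [hs1]
          push_cast
          simp only [Complex.real_smul]
          push_cast
          ring
        set r := t * T with hrdef
        have hr : 0 ≤ r := mul_nonneg ht hT.le
        have h1 : dist z w = r := by
          rw [dist_eq_norm, ← norm_neg, neg_sub, hwz, norm_mul, hnu, mul_one,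
            Complex.norm_real, Real.norm_eq_abs, abs_of_nonneg hr]
        have h2 : ‖w - p‖ = σ + r := by
          have he : w - p = ((σ + r : ℝ) : ℂ) * u := by
            have : w - p = (z - p) + (w - z) := by ring
            rw [this, ← hzpu, hwz]
            push_cast
            ring
          rw [he, norm_mul, hnu, mul_one, Complex.norm_real, Real.norm_eq_abs,
            abs_of_nonneg (by linarith)]
        rw [hfac, hfac, h1, h2, ← hσdef]
        nlinarith [mul_nonneg (mul_nonneg hr hcpos.le) (by linarith : (0:ℝ) ≤ 2 * δ₁ - σ),
          mul_nonneg (mul_nonneg hδ₁.le hcpos.le) hσ.le]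
  obtain ⟨ζ, hζ, hle⟩ := hkey
  have hζfr2 : f ζ ∈ frontier D₂ := hfmap ζ hζ
  have hfr2 : (frontier D₂).Nonempty := ⟨f ζ, hζfr2⟩
  have hfz : f z ∈ D₂ := hmaps ▸ ⟨z, hz, rfl⟩
  have hδ₂ : 0 < bdist D₂ (f z) := bdist_pos_of_mem hD₂open hfr2 hfz
  have hA : 0 < ‖a * d - b * c‖ := norm_pos_iff.mpr habcd
  have hczn : 0 < ‖c * z + d‖ := norm_pos_iff.mpr hczd
  have hcζn : 0 < ‖c * ζ + d‖ := norm_pos_iff.mpr (hpole ζ (frontier_subset_closure hζ))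
  have hf' : 0 < ‖deriv f z‖ := by rw [hnd]; positivity
  have hkey2 : bdist D₂ (f z) ≤ 2 * ‖deriv f z‖ * δ₁ := by
    have hdist : bdist D₂ (f z)
        ≤ ‖a * d - b * c‖ * dist z ζ / (‖c * z + d‖ * ‖c * ζ + d‖) :=
      (Metric.infDist_le_dist_of_mem hζfr2).trans_eq (hdiff ζ hζ)
    refine hdist.trans ?_
    rw [hnd]
    rw [show 2 * (‖a * d - b * c‖ / ‖c * z + d‖ ^ 2) * δ₁
        = 2 * ‖a * d - b * c‖ * δ₁ / ‖c * z + d‖ ^ 2 by ring]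
    rw [div_le_div_iff₀ (by positivity) (by positivity)]
    have hmul := mul_le_mul_of_nonneg_left hle (mul_nonneg hA.le hczn.le)
    nlinarith [hmul]
  have hm1 : mDensity D₁ z ≤ 2 / δ₁ := mDensity_le_two_div hD₁open hD₁bdd hfr1 hz
  have hm2 : 1 / bdist D₂ (f z) ≤ mDensity D₂ (f z) :=
    one_div_le_mDensity hD₂open hD₂bdd hfr2 hfz
  calc mDensity D₁ z ≤ 2 / δ₁ := hm1
    _ ≤ 4 * ‖deriv f z‖ * (1 / bdist D₂ (f z)) := by
        rw [mul_one_div, div_le_div_iff₀ hδ₁ hδ₂]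
        nlinarith [hkey2]
    _ ≤ 4 * ‖deriv f z‖ * mDensity D₂ (f z) :=
        mul_le_mul_of_nonneg_left hm2 (by positivity)
end

section
/- Let D be a bounded proper subdomain of ℝⁿ, n ≥ 2, and let x, y ∈ D. Then every rectifiable path γ joining x and y in D satisfies ∫_γ |dz|/(d(D) − δ_D(z)) ≥ log[(d(D) − δ_D(y))/(d(D) − δ_D(x))]; consequently n_D(x, y) ≥ log[(d(D) − δ_D(y))/(d(D) − δ_D(x))]. -/
open Metric Set

variable {E : Type*} [NormedAddCommGroup E] [NormedSpace ℝ E]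

/-- The n-density `z ↦ 1/(d(D) − δ_D(z))`. -/
noncomputable def nDensity (D : Set E) (z : E) : ℝ :=
  1 / (Metric.diam D - bdist D z)

/-- The metric $n_D$. -/
noncomputable def nDist (D : Set E) (x y : E) : ℝ := pathDist (nDensity D) D x y

section Aux

open Filter Topology MeasureTheory intervalIntegral

/-- A.e. fundamental-theorem-of-calculus inequality for Lipschitz real functions. -/
theorem aux_sub_le_integral {g φ : ℝ → ℝ} {a b M : ℝ} (hab : a ≤ b) (hM : 0 ≤ M)
    (hlip : ∀ s t : ℝ, |g s - g t| ≤ M * |s - t|)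
    (φnonneg : ∀ x, 0 ≤ φ x) (φint : IntegrableOn φ (Icc a b))
    (hae : ∀ᵐ x, x ∈ Set.Ioo a b → ∃ y : ℝ, HasDerivAt g y x ∧ y ≤ φ x) :
    g b - g a ≤ ∫ y in a..b, φ y := by
  have hgc : Continuous g := by
    refine (LipschitzWith.of_dist_le_mul (K := M.toNNReal) fun s t => ?_).continuous
    rw [Real.dist_eq, Real.dist_eq, Real.coe_toNNReal M hM]
    exact hlip s t
  refine le_of_forall_pos_le_add fun ε εpos => ?_
  have hN0 : volume ({x | ¬ (x ∈ Set.Ioo a b → ∃ y : ℝ, HasDerivAt g y x ∧ y ≤ φ x)} ∪ {a}) = 0 :=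
    measure_union_null (ae_iff.1 hae) (measure_singleton a)
  have hden : (0:ℝ) < 3 * (2 * M + 1) := by linarith
  have hrpos : (0:ENNReal) < ENNReal.ofReal (ε / (3 * (2 * M + 1))) :=
    ENNReal.ofReal_pos.2 (div_pos εpos hden)
  obtain ⟨U, hUN, hUo, hUvol⟩ := Set.exists_isOpen_lt_of_lt _ _ (hN0 ▸ hrpos)
  rcases exists_lt_lowerSemicontinuous_integral_lt φ φint (show (0:ℝ) < ε/3 by linarith) with
    ⟨G', f_lt_G', G'cont, G'int, G'lt_top, hG'⟩
  have G'0 : ∀ x, (0 : EReal) < G' x := fun x =>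
    lt_of_le_of_lt (by exact_mod_cast φnonneg x) (f_lt_G' x)
  have G'nonneg : ∀ x, 0 ≤ (G' x).toReal := by
    intro x
    rcases eq_or_ne (G' x) ⊤ with h | h
    · simp [h]
    · simpa using EReal.toReal_le_toReal (G'0 x).le (by simp) h
  -- the indicator part
  set ind : ℝ → ℝ := U.indicator fun _ => 2 * M with hind
  have indnonneg : ∀ x, 0 ≤ ind x := fun x =>
    Set.indicator_nonneg (fun _ _ => by linarith) x
  have indint : Integrable ind := by
    rw [hind, integrable_indicator_iff hUo.measurableSet]
    exact integrableOn_const (hUvol.trans ENNReal.ofReal_lt_top).ne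
  set ψ : ℝ → ℝ := fun t => (G' t).toReal + ind t with hψ
  have ψnonneg : ∀ x, 0 ≤ ψ x := fun x => add_nonneg (G'nonneg x) (indnonneg x)
  have ψint : ∀ c d, a ≤ c → d ≤ b → IntegrableOn ψ (Icc c d) := by
    intro c d hc hd
    exact (MeasureTheory.IntegrableOn.mono_set G'int (Icc_subset_Icc hc hd)).add indint.integrableOn
  have ψii : ∀ c d, a ≤ c → c ≤ d → d ≤ b → IntervalIntegrable ψ volume c d := by
    intro c d hc hcd hd
    rw [intervalIntegrable_iff_integrableOn_Icc_of_le hcd]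
    exact ψint c d hc hd
  -- integral of ψ over a subinterval of U is at least 2M times the length
  have keyU : ∀ c d, a ≤ c → c ≤ d → d ≤ b → Icc c d ⊆ U →
      M * (d - c) ≤ ∫ w in c..d, ψ w := by
    intro c d hc hcd hd hsub
    have h1 : ∫ w in c..d, ψ w = (∫ w in c..d, (G' w).toReal) + ∫ w in c..d, ind w := by
      rw [← intervalIntegral.integral_add]
      · rw [intervalIntegrable_iff_integrableOn_Icc_of_le hcd]
        exact MeasureTheory.IntegrableOn.mono_set G'int (Icc_subset_Icc hc hd)
      · exact indint.intervalIntegrable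
    have h2 : (0:ℝ) ≤ ∫ w in c..d, (G' w).toReal :=
      intervalIntegral.integral_nonneg hcd fun u _ => G'nonneg u
    have h3 : ∫ w in c..d, ind w = 2 * M * (d - c) := by
      rw [intervalIntegral.integral_of_le hcd]
      have : EqOn ind (fun _ => 2 * M) (Ioc c d) := fun u hu => by
        simp [hind, Set.indicator_of_mem (hsub (Ioc_subset_Icc_self hu))]
      rw [setIntegral_congr_fun measurableSet_Ioc this, setIntegral_const, smul_eq_mul,
        Real.volume_real_Ioc_of_le hcd]
      ring
    rw [h1, h3]
    nlinarith [h2, mul_nonneg hM (sub_nonneg.2 hcd)]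
  -- the main set for real induction
  set s := {t | g t - g a ≤ ∫ u in a..t, ψ u} with hs
  have s_closed : IsClosed (s ∩ Icc a b) := by
    have : ContinuousOn (fun t => (g t - g a, ∫ u in a..t, ψ u)) (Icc a b) := by
      refine ((hgc.sub continuous_const).continuousOn).prodMk ?_
      rw [← uIcc_of_le hab]
      exact intervalIntegral.continuousOn_primitive_interval (by rw [uIcc_of_le hab]; exact ψint a b le_rfl le_rfl)
    rw [hs, inter_comm]
    exact this.preimage_isClosed_of_isClosed isClosed_Icc OrderClosedTopology.isClosed_le'
  have main : Icc a b ⊆ s := by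
    refine s_closed.Icc_subset_of_forall_exists_gt
      (by simp only [hs, mem_setOf_eq, intervalIntegral.integral_same, sub_self, le_refl]) fun t ht v t_lt_v => ?_
    have htmem : t ∈ Ico a b := ht.2
    by_cases htU : t ∈ U
    · -- bad set / left endpoint case: use the indicator
      obtain ⟨r, hr, hball⟩ := Metric.isOpen_iff.1 hUo t htU
      set x := min (t + r / 2) (min v b) with hx
      have htx : t < x := lt_min (by linarith) (lt_min t_lt_v htmem.2)
      have hxb : x ≤ b := (min_le_right _ _).trans (min_le_right _ _)
      have hxv : x ≤ v := (min_le_right _ _).trans (min_le_left _ _)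
      have hsub : Icc t x ⊆ U := by
        intro u hu
        apply hball
        rw [Metric.mem_ball, Real.dist_eq, abs_of_nonneg (sub_nonneg.2 hu.1)]
        have : u ≤ t + r / 2 := hu.2.trans (min_le_left _ _)
        linarith
      refine ⟨x, ?_, ⟨htx, hxv⟩⟩
      have hstep : g x - g t ≤ ∫ w in t..x, ψ w := by
        refine le_trans ?_ (keyU t x htmem.1 htx.le hxb hsub)
        calc g x - g t ≤ |g x - g t| := le_abs_self _
          _ ≤ M * |x - t| := hlip x t
          _ = M * (x - t) := by rw [abs_of_nonneg (sub_nonneg.2 htx.le)]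
      have : g x - g a ≤ (∫ u in a..t, ψ u) + ∫ w in t..x, ψ w := by
        have := ht.1
        rw [hs, mem_setOf_eq] at this
        linarith
      rwa [intervalIntegral.integral_add_adjacent_intervals
        (ψii a t le_rfl htmem.1 htmem.2.le) (ψii t x htmem.1 htx.le hxb)] at this
    · -- good point: there is a derivative
      have htIoo : t ∈ Set.Ioo a b := by
        rcases eq_or_lt_of_le htmem.1 with h | h
        · exact absurd (hUN (Or.inr (by simp [← h]))) htU
        · exact ⟨h, htmem.2⟩
      have htN : ∃ y : ℝ, HasDerivAt g y t ∧ y ≤ φ t := by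
        by_contra hcon
        refine htU (hUN (Or.inl ?_))
        simp only [mem_setOf_eq]
        exact fun himp => hcon (himp htIoo)
      obtain ⟨y₀, hy₀d, hy₀le⟩ := htN
      obtain ⟨y, g'_lt_y', y_lt_G'⟩ : ∃ y : ℝ, (φ t : EReal) < y ∧ (y : EReal) < G' t :=
        EReal.lt_iff_exists_real_btwn.1 (f_lt_G' t)
      have hy₀y : y₀ < y := lt_of_le_of_lt hy₀le (by exact_mod_cast g'_lt_y')
      have I1 : ∀ᶠ u in 𝓝[>] t, (u - t) * y ≤ ∫ w in t..u, (G' w).toReal := by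
        have B : ∀ᶠ u in 𝓝 t, (y : EReal) < G' u := G'cont.lowerSemicontinuousAt _ _ y_lt_G'
        rcases mem_nhds_iff_exists_Ioo_subset.1 B with ⟨m, mM, ⟨hm, hM'⟩, H⟩
        have : Ioo t (min mM b) ∈ 𝓝[>] t := Ioo_mem_nhdsGT (lt_min hM' htmem.2)
        filter_upwards [this] with u hu
        have I : Icc t u ⊆ Icc a b :=
          Icc_subset_Icc htIoo.1.le (hu.2.le.trans (min_le_right _ _))
        calc (u - t) * y = ∫ _ in Icc t u, y := by
              simp only [hu.left.le, MeasureTheory.integral_const, smul_eq_mul, sub_nonneg,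
                MeasurableSet.univ, Real.volume_Icc, Measure.restrict_apply, univ_inter, measureReal_def,
                ENNReal.toReal_ofReal]
          _ ≤ ∫ w in t..u, (G' w).toReal := by
              rw [intervalIntegral.integral_of_le hu.1.le, ← integral_Icc_eq_integral_Ioc]
              apply setIntegral_mono_ae_restrict
              · exact integrableOn_const measure_Icc_lt_top.ne
              · exact MeasureTheory.IntegrableOn.mono_set G'int I
              · have C1 : ∀ᵐ x : ℝ ∂volume.restrict (Icc t u), G' x < ⊤ :=
                  ae_mono (Measure.restrict_mono I le_rfl) G'lt_top
                have C2 : ∀ᵐ x : ℝ ∂volume.restrict (Icc t u), x ∈ Icc t u :=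
                  ae_restrict_mem measurableSet_Icc
                filter_upwards [C1, C2] with w G'w hw
                apply EReal.coe_le_coe_iff.1
                have : w ∈ Ioo m mM := by
                  constructor
                  · exact hm.trans_le hw.1
                  · exact (hw.2.trans_lt hu.2).trans_le (min_le_left _ _)
                refine (le_of_lt (H this)).trans_eq ?_
                exact (EReal.coe_toReal G'w.ne (G'0 w).ne_bot).symm
      have I1' : ∀ᶠ u in 𝓝[>] t, (u - t) * y ≤ ∫ w in t..u, ψ w := by
        have hbnd : ∀ᶠ u in 𝓝[>] t, u ∈ Ioc t b := by
          refine mem_nhdsGT_iff_exists_Ioc_subset.2 ⟨b, htmem.2, Subset.rfl⟩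
        filter_upwards [I1, hbnd] with u hu1 hu2
        refine hu1.trans ?_
        have hsplit : ∫ w in t..u, ψ w = (∫ w in t..u, (G' w).toReal) + ∫ w in t..u, ind w := by
          rw [← intervalIntegral.integral_add]
          · rw [intervalIntegrable_iff_integrableOn_Icc_of_le hu2.1.le]
            exact MeasureTheory.IntegrableOn.mono_set G'int (Icc_subset_Icc htIoo.1.le hu2.2)
          · exact indint.intervalIntegrable
        have : (0:ℝ) ≤ ∫ w in t..u, ind w :=
          intervalIntegral.integral_nonneg hu2.1.le fun w _ => indnonneg w
        linarith
      have I2 : ∀ᶠ u in 𝓝[>] t, g u - g t ≤ (u - t) * y := by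
        filter_upwards [(hy₀d.hasDerivWithinAt (s := Set.Ioi t)).limsup_slope_le'
          (notMem_Ioi.2 le_rfl) hy₀y, self_mem_nhdsWithin] with u hu t_lt_u
        have := mul_le_mul_of_nonneg_left hu.le (sub_pos.2 (mem_Ioi.1 t_lt_u)).le
        rwa [← smul_eq_mul, sub_smul_slope] at this
      have I3 : ∀ᶠ u in 𝓝[>] t, g u - g t ≤ ∫ w in t..u, ψ w := by
        filter_upwards [I1', I2] with u hu1 hu2 using hu2.trans hu1
      have I4 : ∀ᶠ u in 𝓝[>] t, u ∈ Ioc t (min v b) := by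
        refine mem_nhdsGT_iff_exists_Ioc_subset.2 ⟨min v b, ?_, Subset.rfl⟩
        simp only [lt_min_iff, mem_Ioi]
        exact ⟨t_lt_v, htmem.2⟩
      rcases (I3.and I4).exists with ⟨x, hx, h'x⟩
      refine ⟨x, ?_, Ioc_subset_Ioc le_rfl (min_le_left _ _) h'x⟩
      rw [hs, mem_setOf_eq]
      have ht1 := ht.1
      rw [hs, mem_setOf_eq] at ht1
      have : g x - g a ≤ (∫ u in a..t, ψ u) + ∫ w in t..x, ψ w := by linarith
      rwa [intervalIntegral.integral_add_adjacent_intervals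
        (ψii a t le_rfl htIoo.1.le htIoo.2.le)
        (ψii t x htIoo.1.le h'x.1.le (h'x.2.trans (min_le_right _ _)))] at this
  -- put everything together
  have hfinal : g b - g a ≤ ∫ u in a..b, ψ u := main (right_mem_Icc.2 hab)
  have hsplit : ∫ u in a..b, ψ u = (∫ u in a..b, (G' u).toReal) + ∫ u in a..b, ind u := by
    rw [← intervalIntegral.integral_add]
    · rw [intervalIntegrable_iff_integrableOn_Icc_of_le hab]
      exact G'int
    · exact indint.intervalIntegrable
  have hG'2 : ∫ u in a..b, (G' u).toReal ≤ (∫ y in a..b, φ y) + ε/3 := by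
    rw [intervalIntegral.integral_of_le hab, intervalIntegral.integral_of_le hab,
      ← integral_Icc_eq_integral_Ioc, ← integral_Icc_eq_integral_Ioc]
    exact hG'.le
  have hind2 : ∫ u in a..b, ind u ≤ 2 * ε / 3 := by
    rw [intervalIntegral.integral_of_le hab]
    have h1 : ∫ u in Set.Ioc a b, ind u ≤ ∫ u, ind u :=
      setIntegral_le_integral indint (ae_of_all _ indnonneg)
    have h2 : ∫ u, ind u = 2 * M * (volume U).toReal := by
      rw [hind, MeasureTheory.integral_indicator hUo.measurableSet, setIntegral_const, smul_eq_mul, mul_comm, measureReal_def]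
    have h3 : (volume U).toReal ≤ ε / (3 * (2 * M + 1)) := by
      have := ENNReal.toReal_mono ENNReal.ofReal_ne_top hUvol.le
      rwa [ENNReal.toReal_ofReal (le_of_lt (div_pos εpos hden))] at this
    have h4 : 2 * M * (volume U).toReal ≤ 2 * M * (ε / (3 * (2 * M + 1))) :=
      mul_le_mul_of_nonneg_left h3 (by linarith)
    have h5 : 2 * M * (ε / (3 * (2 * M + 1))) ≤ 2 * ε / 3 := by
      rw [← mul_div_assoc, div_le_div_iff₀ hden (by norm_num)]
      nlinarith [mul_nonneg hM εpos.le]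
    linarith
  calc g b - g a ≤ ∫ u in a..b, ψ u := hfinal
    _ = (∫ u in a..b, (G' u).toReal) + ∫ u in a..b, ind u := hsplit
    _ ≤ ((∫ y in a..b, φ y) + ε/3) + 2 * ε / 3 := add_le_add hG'2 hind2
    _ ≤ (∫ y in a..b, φ y) + ε := by linarith


/-- Comparison of derivatives. -/
theorem aux_deriv_le {γ : ℝ → E} {v : ℝ → ℝ} {t : ℝ}
    (hγ : DifferentiableAt ℝ γ t) (hv : DifferentiableAt ℝ v t)
    (hle : ∀ s, |v s - v t| ≤ dist (γ s) (γ t)) : deriv v t ≤ ‖deriv γ t‖ := by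
  have hsub : Set.Ioi t ⊆ {t}ᶜ := fun s hs => ne_of_gt hs
  have h1 : Filter.Tendsto (slope v t) (nhdsWithin t (Set.Ioi t)) (nhds (deriv v t)) :=
    (hasDerivAt_iff_tendsto_slope.1 hv.hasDerivAt).mono_left (nhdsWithin_mono t hsub)
  have h2 : Filter.Tendsto (fun s => ‖slope γ t s‖) (nhdsWithin t (Set.Ioi t))
      (nhds ‖deriv γ t‖) :=
    ((hasDerivAt_iff_tendsto_slope.1 hγ.hasDerivAt).mono_left (nhdsWithin_mono t hsub)).norm
  refine le_of_tendsto_of_tendsto h1 h2 ?_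
  filter_upwards [self_mem_nhdsWithin] with s hs
  have hst : 0 < s - t := sub_pos.2 hs
  have hsl : ‖slope γ t s‖ = ‖γ s - γ t‖ / (s - t) := by
    rw [slope_def_module, norm_smul, Real.norm_eq_abs, abs_inv, abs_of_pos hst, div_eq_inv_mul]
  show slope v t s ≤ ‖slope γ t s‖
  rw [hsl, slope_def_field]
  gcongr
  exact (le_abs_self _).trans ((hle s).trans_eq (dist_eq_norm _ _))

/-- The constant path is a rectifiable path. -/
theorem aux_rect_const {D : Set E} {z : E} (hz : z ∈ D) :
    IsRectPathIn D z z (fun _ => z) :=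
  ⟨⟨0, LipschitzWith.const z⟩, rfl, rfl, fun _ _ => hz⟩

/-- Segment paths are rectifiable. -/
theorem aux_rect_segment {D : Set E} {z w : E} (h : ∀ t ∈ Set.Icc (0:ℝ) 1, z + t • (w - z) ∈ D) :
    IsRectPathIn D z w (fun t => z + t • (w - z)) := by
  refine ⟨⟨‖w - z‖₊, ?_⟩, by simp, by simp, h⟩
  refine LipschitzWith.of_dist_le_mul fun s t => ?_
  have h1 : (z + s • (w - z)) - (z + t • (w - z)) = (s - t) • (w - z) := by
    rw [sub_smul]; abel
  rw [dist_eq_norm, h1, norm_smul, Real.norm_eq_abs, coe_nnnorm, Real.dist_eq, mul_comm]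

/-- Concatenation of rectifiable paths. -/
theorem aux_rect_trans {D : Set E} {p q r : E} {γ₁ γ₂ : ℝ → E}
    (h₁ : IsRectPathIn D p q γ₁) (h₂ : IsRectPathIn D q r γ₂) :
    ∃ γ, IsRectPathIn D p r γ := by
  obtain ⟨⟨K₁, hK₁⟩, h10, h11, h1m⟩ := h₁
  obtain ⟨⟨K₂, hK₂⟩, h20, h21, h2m⟩ := h₂
  have hq : γ₁ 1 = γ₂ 0 := by rw [h11, h20]
  refine ⟨fun t => if t ≤ 1/2 then γ₁ (2*t) else γ₂ (2*t - 1), ⟨2*(K₁+K₂), ?_⟩, ?_, ?_, ?_⟩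
  · have hmono : ∀ s t : ℝ, s ≤ t →
        dist (if s ≤ 1/2 then γ₁ (2*s) else γ₂ (2*s - 1))
          (if t ≤ 1/2 then γ₁ (2*t) else γ₂ (2*t - 1)) ≤ (2*((K₁:ℝ)+(K₂:ℝ))) * (t - s) := by
      intro s t hst
      have hK₁' := fun a b => hK₁.dist_le_mul a b
      have hK₂' := fun a b => hK₂.dist_le_mul a b
      split_ifs with hs ht ht
      · calc dist (γ₁ (2*s)) (γ₁ (2*t)) ≤ K₁ * dist (2*s) (2*t) := hK₁' _ _
          _ = (K₁:ℝ) * (2*(t - s)) := by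
              rw [Real.dist_eq, abs_of_nonpos (by linarith)]; ring
          _ ≤ (2*((K₁:ℝ)+(K₂:ℝ))) * (t - s) := by
              nlinarith [mul_nonneg (NNReal.coe_nonneg K₂) (sub_nonneg.2 hst)]
      · calc dist (γ₁ (2*s)) (γ₂ (2*t - 1))
            ≤ dist (γ₁ (2*s)) (γ₁ 1) + dist (γ₁ 1) (γ₂ (2*t - 1)) := dist_triangle _ _ _
          _ = dist (γ₁ (2*s)) (γ₁ 1) + dist (γ₂ 0) (γ₂ (2*t - 1)) := by rw [hq]
          _ ≤ (K₁:ℝ) * dist (2*s) 1 + (K₂:ℝ) * dist 0 (2*t - 1) :=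
              add_le_add (hK₁' _ _) (hK₂' _ _)
          _ ≤ (2*((K₁:ℝ)+(K₂:ℝ))) * (t - s) := by
              push_neg at ht
              rw [Real.dist_eq, Real.dist_eq, abs_of_nonpos (by linarith),
                abs_of_nonpos (by linarith)]
              nlinarith [mul_nonneg (NNReal.coe_nonneg K₁)
                  (by linarith : (0:ℝ) ≤ 2*(t-s) - (1 - 2*s)),
                mul_nonneg (NNReal.coe_nonneg K₂)
                  (by linarith : (0:ℝ) ≤ 2*(t-s) - (2*t - 1))]
      · exact absurd (hst.trans ht) hs
      · calc dist (γ₂ (2*s - 1)) (γ₂ (2*t - 1)) ≤ K₂ * dist (2*s - 1) (2*t - 1) := hK₂' _ _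
          _ = (K₂:ℝ) * (2*(t - s)) := by
              rw [Real.dist_eq, abs_of_nonpos (by linarith)]; ring
          _ ≤ (2*((K₁:ℝ)+(K₂:ℝ))) * (t - s) := by
              nlinarith [mul_nonneg (NNReal.coe_nonneg K₁) (sub_nonneg.2 hst)]
    refine LipschitzWith.of_dist_le_mul fun s t => ?_
    have hcast : ((2*(K₁+K₂) : NNReal) : ℝ) = 2*((K₁:ℝ)+(K₂:ℝ)) := by push_cast; ring
    rcases le_total s t with h | h
    · rw [hcast, Real.dist_eq, abs_of_nonpos (by linarith)]
      have := hmono s t h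
      linarith
    · rw [hcast, Real.dist_eq, abs_of_nonneg (by linarith), dist_comm]
      have := hmono t s h
      linarith
  · norm_num [h10]
  · norm_num [h21]
  · intro t ht
    show (if t ≤ 1/2 then γ₁ (2*t) else γ₂ (2*t - 1)) ∈ D
    by_cases hle : t ≤ 1/2
    · rw [if_pos hle]
      exact h1m _ ⟨by linarith [ht.1], by linarith [ht.2]⟩
    · rw [if_neg hle]
      push_neg at hle
      exact h2m _ ⟨by linarith, by linarith [ht.2]⟩

/-- Any two points of an open preconnected set are joined by a rectifiable path. -/
theorem aux_exists_rect_path {D : Set E} (hDo : IsOpen D) (hDc : IsPreconnected D)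
    {x y : E} (hx : x ∈ D) (hy : y ∈ D) : ∃ γ, IsRectPathIn D x y γ := by
  classical
  set u : Set E := {z | z ∈ D ∧ ∃ γ, IsRectPathIn D x z γ} with hu
  set v : Set E := {z | z ∈ D ∧ ¬ ∃ γ, IsRectPathIn D x z γ} with hv
  have hseg : ∀ z ∈ D, ∀ ρ > 0, ball z ρ ⊆ D → ∀ w ∈ ball z ρ,
      IsRectPathIn D w z (fun t => w + t • (z - w)) := by
    intro z hz ρ hρ hball w hw
    refine aux_rect_segment fun t ht => hball ?_
    have : w + t • (z - w) ∈ segment ℝ w z := by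
      refine ⟨1 - t, t, by linarith [ht.1, ht.2], ht.1, by ring, ?_⟩
      module
    exact (convex_ball z ρ).segment_subset hw (mem_ball_self hρ) this
  have huo : IsOpen u := by
    rw [Metric.isOpen_iff]
    intro z hz
    obtain ⟨ρ, hρ, hball⟩ := Metric.isOpen_iff.1 hDo z hz.1
    refine ⟨ρ, hρ, fun w hw => ?_⟩
    obtain ⟨γ, hγ⟩ := hz.2
    have hseg2 : IsRectPathIn D z w (fun t => z + t • (w - z)) := by
      refine aux_rect_segment fun t ht => hball ?_
      have : z + t • (w - z) ∈ segment ℝ z w :=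
        ⟨1 - t, t, by linarith [ht.1, ht.2], ht.1, by ring, by module⟩
      exact (convex_ball z ρ).segment_subset (mem_ball_self hρ) hw this
    exact ⟨hball hw, aux_rect_trans hγ hseg2⟩
  have hvo : IsOpen v := by
    rw [Metric.isOpen_iff]
    intro z hz
    obtain ⟨ρ, hρ, hball⟩ := Metric.isOpen_iff.1 hDo z hz.1
    refine ⟨ρ, hρ, fun w hw => ⟨hball hw, fun hcon => hz.2 ?_⟩⟩
    obtain ⟨γ, hγ⟩ := hcon
    exact aux_rect_trans hγ (hseg z hz.1 ρ hρ hball w hw)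
  have hDuv : D ⊆ u ∪ v := by
    intro z hz
    by_cases h : ∃ γ, IsRectPathIn D x z γ
    · exact Or.inl ⟨hz, h⟩
    · exact Or.inr ⟨hz, h⟩
  have hdisj : Disjoint u v := by
    rw [Set.disjoint_left]
    rintro z ⟨_, hzp⟩ ⟨_, hznp⟩
    exact hznp hzp
  have hDu : D ⊆ u :=
    hDc.subset_left_of_subset_union huo hvo hdisj hDuv
      ⟨x, hx, hx, ⟨_, aux_rect_const hx⟩⟩
  exact (hDu hy).2

end Aux

/-- Lemma: logarithmic lower bound for the $n_D$-metric.
For a bounded proper subdomain $D ⊂ ℝ^n$, $n ≥ 2$, and $x, y ∈ D$, every rectifiable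
path $γ$ joining $x$ and $y$ in $D$ satisfies
$∫_γ |dz|/(d(D) − δ_D(z)) ≥ \log[(d(D) − δ_D(y))/(d(D) − δ_D(x))]$; consequently
$n_D(x,y) ≥ \log[(d(D) − δ_D(y))/(d(D) − δ_D(x))]$. -/
theorem nDist_log_lower_bound {n : ℕ} (hn : 2 ≤ n)
    (D : Set (EuclideanSpace ℝ (Fin n)))
    (hDopen : IsOpen D) (hDconn : IsConnected D)
    (hDbdd : Bornology.IsBounded D) (hDproper : D ≠ Set.univ)
    (x y : EuclideanSpace ℝ (Fin n)) (hx : x ∈ D) (hy : y ∈ D) :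
    (∀ γ : ℝ → EuclideanSpace ℝ (Fin n), IsRectPathIn D x y γ →
      Real.log ((Metric.diam D - bdist D y) / (Metric.diam D - bdist D x))
        ≤ pathIntegral (nDensity D) γ) ∧
    Real.log ((Metric.diam D - bdist D y) / (Metric.diam D - bdist D x))
      ≤ nDist D x y := by
  classical
  haveI : Nontrivial (EuclideanSpace ℝ (Fin n)) := by
    refine ⟨⟨EuclideanSpace.single ⟨0, by omega⟩ 1, 0, fun h => ?_⟩⟩
    have h0 := congrArg (fun w : EuclideanSpace ℝ (Fin n) => w ⟨0, by omega⟩) h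
    simp [EuclideanSpace.single_apply] at h0
  have hDne : D.Nonempty := hDconn.nonempty
  have hfr : (frontier D).Nonempty := nonempty_frontier_iff.2 ⟨hDne, hDproper⟩
  -- basic geometric facts
  have hkey : ∀ z ∈ D, 0 < bdist D z ∧ 2 * bdist D z ≤ Metric.diam D := by
    intro z hz
    have hznf : z ∉ frontier D := by
      rw [hDopen.frontier_eq]
      exact fun h => h.2 hz
    have hpos : 0 < bdist D z :=
      (isClosed_frontier.notMem_iff_infDist_pos hfr).1 hznf
    have hball : ball z (bdist D z) ⊆ D := by
      have hdisj : ∀ w ∈ ball z (bdist D z), w ∉ frontier D := by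
        intro w hw hwf
        have h1 : bdist D z ≤ dist z w := Metric.infDist_le_dist_of_mem hwf
        rw [mem_ball, dist_comm] at hw
        exact absurd h1 (not_le.2 hw)
      refine IsPreconnected.subset_left_of_subset_union hDopen
        isClosed_closure.isOpen_compl
        (disjoint_compl_right.mono_left subset_closure) ?_ ⟨z, mem_ball_self hpos, hz⟩
        (convex_ball z _).isPreconnected
      intro w hw
      by_cases h : w ∈ closure D
      · left
        by_contra hD
        exact hdisj w hw (by rw [hDopen.frontier_eq]; exact ⟨h, hD⟩)
      · right; exact h
    obtain ⟨e, he⟩ := exists_norm_eq (EuclideanSpace ℝ (Fin n)) (zero_le_one (α := ℝ))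
    have hstep : ∀ s : ℝ, 0 ≤ s → s < bdist D z → 2 * s ≤ Metric.diam D := by
      intro s hs0 hsr
      have hmem : ∀ a : EuclideanSpace ℝ (Fin n), ‖a‖ = s → z + a ∈ D := by
        intro a ha
        apply hball
        rw [mem_ball, dist_eq_norm, add_sub_cancel_left, ha]
        exact hsr
      have h1 : z + s • e ∈ D := hmem _
        (by rw [norm_smul, he, Real.norm_eq_abs, abs_of_nonneg hs0, mul_one])
      have h2 : z + (-s) • e ∈ D := hmem _
        (by rw [norm_smul, he, Real.norm_eq_abs, abs_neg, abs_of_nonneg hs0, mul_one])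
      have h3 : dist (z + s • e) (z + (-s) • e) = 2 * s := by
        rw [dist_eq_norm]
        have h4 : (z + s • e) - (z + (-s) • e) = (2 * s) • e := by module
        rw [h4, norm_smul, he, mul_one, Real.norm_eq_abs, abs_of_nonneg (by linarith)]
      calc 2 * s = dist (z + s • e) (z + (-s) • e) := h3.symm
        _ ≤ Metric.diam D := dist_le_diam_of_mem hDbdd h1 h2
    refine ⟨hpos, ?_⟩
    by_contra hcon
    push_neg at hcon
    have hd0 : 0 ≤ Metric.diam D := diam_nonneg
    have h4 := hstep ((Metric.diam D / 2 + bdist D z) / 2) (by linarith) (by linarith)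
    linarith
  set c : ℝ := Metric.diam D / 2 with hc
  have hcpos : 0 < c := by
    have h1 := (hkey x hx).1
    have h2 := (hkey x hx).2
    rw [hc]; linarith
  have hub : ∀ z ∈ D, c ≤ Metric.diam D - bdist D z := by
    intro z hz
    have := (hkey z hz).2
    rw [hc]; linarith
  have hxpos : 0 < Metric.diam D - bdist D x := lt_of_lt_of_le hcpos (hub x hx)
  have hypos : 0 < Metric.diam D - bdist D y := lt_of_lt_of_le hcpos (hub y hy)
  have hmain : ∀ γ : ℝ → EuclideanSpace ℝ (Fin n), IsRectPathIn D x y γ →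
      Real.log ((Metric.diam D - bdist D y) / (Metric.diam D - bdist D x))
        ≤ pathIntegral (nDensity D) γ := by
    intro γ hγ
    obtain ⟨⟨K, hK⟩, hγ0, hγ1, hγmem⟩ := hγ
    set v : ℝ → ℝ := fun t => max (Metric.diam D - bdist D (γ t)) c with hv
    have hvc : ∀ t, c ≤ v t := fun t => le_max_right _ _
    have hvpos : ∀ t, 0 < v t := fun t => lt_of_lt_of_le hcpos (hvc t)
    have hveq : ∀ t ∈ Set.Icc (0:ℝ) 1, v t = Metric.diam D - bdist D (γ t) := fun t ht =>
      max_eq_left (hub _ (hγmem t ht))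
    have hvlipγ : ∀ s t, |v s - v t| ≤ dist (γ s) (γ t) := by
      intro s t
      refine (abs_max_sub_max_le_abs _ _ _).trans ?_
      have h1 : (Metric.diam D - bdist D (γ s)) - (Metric.diam D - bdist D (γ t))
          = bdist D (γ t) - bdist D (γ s) := by ring
      rw [h1]
      have h2 := ((Metric.lipschitz_infDist_pt (frontier D)).dist_le_mul (γ t) (γ s))
      rw [NNReal.coe_one, one_mul, Real.dist_eq] at h2
      exact h2.trans (by rw [dist_comm])
    set g : ℝ → ℝ := fun t => Real.log (v t) with hg
    set M : ℝ := K / c with hM'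
    have hM : 0 ≤ M := div_nonneg (NNReal.coe_nonneg K) hcpos.le
    have hlip : ∀ s t : ℝ, |g s - g t| ≤ M * |s - t| := by
      have key : ∀ s t : ℝ, v t ≤ v s → g s - g t ≤ M * |s - t| := by
        intro s t h
        calc g s - g t = Real.log (v s / v t) := by
              rw [Real.log_div (hvpos s).ne' (hvpos t).ne']
          _ ≤ v s / v t - 1 := Real.log_le_sub_one_of_pos (div_pos (hvpos s) (hvpos t))
          _ = (v s - v t) / v t := by rw [sub_div, div_self (hvpos t).ne']
          _ ≤ (v s - v t) / c := by gcongr; exact hvc t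
          _ ≤ dist (γ s) (γ t) / c := by
              gcongr
              exact (le_abs_self _).trans (hvlipγ s t)
          _ ≤ ((K : ℝ) * dist s t) / c := by gcongr; exact hK.dist_le_mul s t
          _ = M * |s - t| := by rw [Real.dist_eq, hM']; ring
      intro s t
      rcases le_total (v t) (v s) with h | h
      · have h2 : g t ≤ g s := Real.log_le_log (hvpos t) h
        rw [abs_of_nonneg (by linarith)]
        exact key s t h
      · have h2 : g s ≤ g t := Real.log_le_log (hvpos s) h
        rw [abs_of_nonpos (by linarith), abs_sub_comm]
        have := key t s h
        linarith [key t s h]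
    have hγdiff := hK.ae_differentiableAt_real
    have hvlip : LipschitzWith K v := by
      refine LipschitzWith.of_dist_le_mul fun s t => ?_
      rw [Real.dist_eq]
      exact (hvlipγ s t).trans (hK.dist_le_mul s t)
    have hvdiff := hvlip.ae_differentiableAt_real
    set φ : ℝ → ℝ := fun t => ‖deriv γ t‖ / v t with hφ
    have φnonneg : ∀ t, 0 ≤ φ t := fun t => div_nonneg (norm_nonneg _) (hvpos t).le
    have hKd : ∀ t, ‖deriv γ t‖ ≤ (K : ℝ) := by
      intro t
      have h1 : ‖fderiv ℝ γ t‖ ≤ (K : ℝ) := norm_fderiv_le_of_lipschitz ℝ hK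
      calc ‖deriv γ t‖ = ‖(fderiv ℝ γ t) 1‖ := by rw [fderiv_apply_one_eq_deriv]
        _ ≤ ‖fderiv ℝ γ t‖ * ‖(1:ℝ)‖ := ContinuousLinearMap.le_opNorm _ _
        _ ≤ (K : ℝ) := by rw [norm_one, mul_one]; exact h1
    have φint : MeasureTheory.IntegrableOn φ (Set.Icc (0:ℝ) 1) := by
      have hmeas : MeasureTheory.AEStronglyMeasurable φ
          (MeasureTheory.volume.restrict (Set.Icc (0:ℝ) 1)) := by
        exact (((measurable_deriv γ).norm.div hvlip.continuous.measurable)).aestronglyMeasurable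
      refine MeasureTheory.Integrable.mono' (g := fun _ => (K:ℝ)/c)
        (MeasureTheory.integrableOn_const measure_Icc_lt_top.ne) hmeas
        (MeasureTheory.ae_of_all _ fun t => ?_)
      rw [Real.norm_eq_abs, abs_of_nonneg (φnonneg t)]
      exact div_le_div₀ (NNReal.coe_nonneg K) (hKd t) hcpos (hvc t)
    have hae : ∀ᵐ t, t ∈ Set.Ioo (0:ℝ) 1 → ∃ yd : ℝ, HasDerivAt g yd t ∧ yd ≤ φ t := by
      filter_upwards [hγdiff, hvdiff] with t hγt hvt
      intro _
      refine ⟨deriv v t / v t, hvt.hasDerivAt.log (hvpos t).ne', ?_⟩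
      have h1 : deriv v t ≤ ‖deriv γ t‖ :=
        aux_deriv_le hγt hvt (fun s => hvlipγ s t)
      show deriv v t / v t ≤ ‖deriv γ t‖ / v t
      exact div_le_div₀ (norm_nonneg _) h1 (hvpos t) le_rfl
    have hfinal := aux_sub_le_integral zero_le_one hM hlip φnonneg φint hae
    have hPI : pathIntegral (nDensity D) γ = ∫ t in (0:ℝ)..1, φ t := by
      unfold pathIntegral
      refine intervalIntegral.integral_congr fun t ht => ?_
      rw [uIcc_of_le zero_le_one] at ht
      show nDensity D (γ t) * ‖deriv γ t‖ = ‖deriv γ t‖ / v t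
      rw [hveq t ht, nDensity]
      ring
    have hg0 : g 0 = Real.log (Metric.diam D - bdist D x) := by
      rw [hg]
      show Real.log (v 0) = _
      rw [hveq 0 (by norm_num), hγ0]
    have hg1 : g 1 = Real.log (Metric.diam D - bdist D y) := by
      rw [hg]
      show Real.log (v 1) = _
      rw [hveq 1 (by norm_num), hγ1]
    rw [hPI, Real.log_div hypos.ne' hxpos.ne']
    calc Real.log (Metric.diam D - bdist D y) - Real.log (Metric.diam D - bdist D x)
        = g 1 - g 0 := by rw [hg0, hg1]
      _ ≤ ∫ t in (0:ℝ)..1, φ t := hfinal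
  refine ⟨hmain, ?_⟩
  obtain ⟨γ₀, hγ₀⟩ := aux_exists_rect_path hDopen hDconn.isPreconnected hx hy
  unfold nDist pathDist
  refine le_csInf ⟨_, ⟨γ₀, hγ₀, rfl⟩⟩ ?_
  rintro b ⟨γ, hγ, rfl⟩
  exact hmain γ hγ
end

section
/- Let R > 1 and A_R = {z ∈ ℂ : 1/R < |z| < R}, and let C_r = {z : |z| = r} with 1/R < r < R. Then the m-length of C_r in A_R equals 4πR³r/((Rr − 1)(2R² − Rr + 1)) if 1/R < r ≤ (1 + R²)/(2R), and equals 4πRr/(R² − r²) if (1 + R²)/(2R) ≤ r < R. -/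
open Metric Set Filter Topology

variable {E : Type*} [NormedAddCommGroup E] [NormedSpace ℝ E]

/-- The m-length of the circle $C_r = \{|z| = r\}$ inside $D$, computed from the
parametrization $z = r e^{iθ}$, $0 ≤ θ ≤ 2π$: $∫_0^{2π} m_D(r e^{iθ}) r\,dθ$. -/
noncomputable def mCircleLength (D : Set ℂ) (r : ℝ) : ℝ :=
  ∫ θ in (0:ℝ)..(2 * Real.pi), mDensity D ((r : ℂ) * Complex.exp (θ * Complex.I)) * r

/-- Proposition: m-perimeter of circles in the annulus $A_R$.
For $R > 1$, $A_R = \{1/R < |z| < R\}$ and $1/R < r < R$, the m-length of $C_r$ in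
$A_R$ equals $4πR^3r/((Rr−1)(2R^2−Rr+1))$ if $r ≤ (1+R^2)/(2R)$ and
$4πRr/(R^2−r^2)$ if $r ≥ (1+R^2)/(2R)$. -/
theorem mCircleLength_annulus (R r : ℝ) (hR : 1 < R)
    (hr₁ : 1 / R < r) (hr₂ : r < R) :
    (r ≤ (1 + R ^ 2) / (2 * R) →
      mCircleLength {z : ℂ | 1 / R < ‖z‖ ∧ ‖z‖ < R} r
        = 4 * Real.pi * R ^ 3 * r / ((R * r - 1) * (2 * R ^ 2 - R * r + 1))) ∧
    ((1 + R ^ 2) / (2 * R) ≤ r →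
      mCircleLength {z : ℂ | 1 / R < ‖z‖ ∧ ‖z‖ < R} r
        = 4 * Real.pi * R * r / (R ^ 2 - r ^ 2)) := by
  have hR0 : (0:ℝ) < R := lt_trans one_pos hR
  have hiR : (0:ℝ) < 1/R := by positivity
  have hiRR : 1/R < R := by rw [div_lt_iff₀ hR0]; nlinarith
  have hr0 : 0 < r := lt_trans hiR hr₁
  set D : Set ℂ := {z : ℂ | 1 / R < ‖z‖ ∧ ‖z‖ < R} with hDdef
  have hopen : IsOpen D := by
    have : D = {z : ℂ | 1/R < ‖z‖} ∩ {z : ℂ | ‖z‖ < R} := rfl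
    rw [this]
    exact (isOpen_lt continuous_const continuous_norm).inter
      (isOpen_lt continuous_norm continuous_const)
  have hclosure_sub : closure D ⊆ {z : ℂ | 1/R ≤ ‖z‖ ∧ ‖z‖ ≤ R} := by
    apply closure_minimal
    · intro z hz; exact ⟨le_of_lt hz.1, le_of_lt hz.2⟩
    · exact (isClosed_le continuous_const continuous_norm).inter
        (isClosed_le continuous_norm continuous_const)
  have hmem_closure : ∀ z : ℂ, 1/R ≤ ‖z‖ → ‖z‖ ≤ R → z ∈ closure D := by
    intro z h1 h2
    have hz0 : 0 < ‖z‖ := lt_of_lt_of_le hiR h1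
    set a := 1/(R*‖z‖) with ha
    set b := R/‖z‖ with hb
    have ha0 : 0 < a := by positivity
    have hab : a < b := by
      rw [ha, hb, div_lt_div_iff₀ (by positivity) hz0]
      have h11 : (1:ℝ) < R*R := by nlinarith
      nlinarith [mul_lt_mul_of_pos_right h11 hz0]
    have ha1 : a ≤ 1 := by
      rw [ha, div_le_one (by positivity)]
      calc (1:ℝ) = (1/R) * R := by field_simp
      _ ≤ ‖z‖ * R := by nlinarith
      _ = R * ‖z‖ := by ring
    have hb1 : 1 ≤ b := by
      rw [hb, le_div_iff₀ hz0]; linarith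
    have hmem : (1:ℝ) ∈ closure (Ioo a b) := by
      rw [closure_Ioo (ne_of_lt hab)]
      exact ⟨ha1, hb1⟩
    have hne : (𝓝[Ioo a b] (1:ℝ)).NeBot := mem_closure_iff_nhdsWithin_neBot.mp hmem
    have htend : Filter.Tendsto (fun t : ℝ => (t:ℂ) * z) (𝓝[Ioo a b] (1:ℝ)) (𝓝 z) := by
      have : Filter.Tendsto (fun t : ℝ => (t:ℂ) * z) (𝓝 (1:ℝ)) (𝓝 (((1:ℝ):ℂ) * z)) :=
        (Complex.continuous_ofReal.mul continuous_const).tendsto 1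
      simpa using this.mono_left nhdsWithin_le_nhds
    refine mem_closure_of_tendsto htend ?_
    filter_upwards [eventually_mem_nhdsWithin] with t ht
    have ht0 : 0 < t := lt_trans ha0 ht.1
    have hnorm : ‖(t:ℂ) * z‖ = t * ‖z‖ := by
      rw [norm_mul, Complex.norm_real, Real.norm_eq_abs, abs_of_pos ht0]
    have e1 : a * ‖z‖ = 1/R := by
      rw [ha, one_div, mul_inv, mul_assoc, inv_mul_cancel₀ (ne_of_gt hz0), mul_one, one_div]
    have e2 : b * ‖z‖ = R := div_mul_cancel₀ R (ne_of_gt hz0)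
    have l1 := mul_lt_mul_of_pos_right ht.1 hz0
    have l2 := mul_lt_mul_of_pos_right ht.2 hz0
    constructor
    · rw [hnorm]; linarith
    · rw [hnorm]; linarith
  have hfrontier : ∀ w : ℂ, w ∈ frontier D ↔ (‖w‖ = 1/R ∨ ‖w‖ = R) := by
    intro w
    rw [hopen.frontier_eq]
    constructor
    · rintro ⟨hwc, hwD⟩
      have h := hclosure_sub hwc
      simp only [hDdef, mem_setOf_eq, not_and_or, not_lt] at hwD
      rcases hwD with h1 | h2
      · exact Or.inl (le_antisymm h1 h.1)
      · exact Or.inr (le_antisymm h.2 h2)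
    · rintro (h | h)
      · refine ⟨hmem_closure w (le_of_eq h.symm) (by rw [h]; linarith), ?_⟩
        simp only [hDdef, mem_setOf_eq, h, not_and_or, not_lt]
        exact Or.inl le_rfl
      · refine ⟨hmem_closure w (by rw [h]; linarith) (le_of_eq h), ?_⟩
        simp only [hDdef, mem_setOf_eq, h, not_and_or, not_lt]
        exact Or.inr le_rfl
  have hfne : (frontier D).Nonempty := by
    refine ⟨(R:ℂ), (hfrontier _).mpr (Or.inr ?_)⟩
    simp [abs_of_pos hR0]
  have hbdist : ∀ z : ℂ, ‖z‖ = r → bdist D z = min (r - 1/R) (R - r) := by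
    intro z hz
    have hδ1 : 0 < r - 1/R := by linarith
    have hδ2 : 0 < R - r := by linarith
    apply le_antisymm
    · apply le_min
      · -- witness at inner circle
        have hw : (((1/(R*r):ℝ)):ℂ) * z ∈ frontier D := by
          refine (hfrontier _).mpr (Or.inl ?_)
          rw [norm_mul, Complex.norm_real, Real.norm_eq_abs,
            abs_of_pos (by positivity), hz]
          field_simp
        refine le_trans (Metric.infDist_le_dist_of_mem hw) ?_
        rw [dist_eq_norm]
        have : z - (((1/(R*r):ℝ)):ℂ) * z = (((1 - 1/(R*r):ℝ)):ℂ) * z := by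
          push_cast; ring
        rw [this, norm_mul, Complex.norm_real, Real.norm_eq_abs, hz,
          abs_of_pos (by
            rw [sub_pos, div_lt_one (by positivity)]
            nlinarith [(div_lt_iff₀ hR0).mp hr₁])]
        rw [sub_mul, one_mul]
        have : 1/(R*r) * r = 1/R := by field_simp
        rw [this]
      · have hw : (((R/r:ℝ)):ℂ) * z ∈ frontier D := by
          refine (hfrontier _).mpr (Or.inr ?_)
          rw [norm_mul, Complex.norm_real, Real.norm_eq_abs,
            abs_of_pos (by positivity), hz]
          field_simp
        refine le_trans (Metric.infDist_le_dist_of_mem hw) ?_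
        rw [dist_eq_norm]
        have : z - (((R/r:ℝ)):ℂ) * z = (((1 - R/r:ℝ)):ℂ) * z := by
          push_cast; ring
        rw [this, norm_mul, Complex.norm_real, Real.norm_eq_abs, hz,
          abs_of_neg (by rw [sub_neg]; rw [lt_div_iff₀ hr0]; nlinarith)]
        rw [neg_sub, sub_mul, one_mul]
        have : R/r * r = R := by field_simp
        rw [this]
    · by_contra hcon
      push_neg at hcon
      obtain ⟨w, hwf, hwd⟩ := (Metric.infDist_lt_iff hfne).mp hcon
      have habs : |‖z‖ - ‖w‖| ≤ ‖z - w‖ := abs_norm_sub_norm_le z w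
      rw [dist_eq_norm] at hwd
      rcases (hfrontier w).mp hwf with h | h
      · rw [hz, h] at habs
        rw [abs_of_pos hδ1] at habs
        have := min_le_left (r - 1/R) (R - r)
        linarith
      · rw [hz, h] at habs
        rw [abs_of_neg (by linarith : r - R < 0), neg_sub] at habs
        have := min_le_right (r - 1/R) (R - r)
        linarith
  have hDsub : D ⊆ ball (0:ℂ) R := by
    intro z hz
    rw [mem_ball_zero_iff]
    exact hz.2
  have hbdd : Bornology.IsBounded D := Metric.isBounded_ball.subset hDsub
  have hdiam : diam D = 2 * R := by
    apply le_antisymm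
    · exact le_trans (diam_mono hDsub Metric.isBounded_ball) (diam_ball hR0.le)
    · by_contra hcon
      push_neg at hcon
      set s := (max (1/R) (diam D / 2) + R)/2 with hs
      have hd0 : 0 ≤ diam D := diam_nonneg
      have hmax : max (1/R) (diam D / 2) < R := max_lt hiRR (by linarith)
      have hs1 : 1/R < s := by
        have := le_max_left (1/R) (diam D / 2)
        rw [hs]; linarith
      have hs2 : s < R := by rw [hs]; linarith
      have hs3 : diam D / 2 < s := by
        have := le_max_right (1/R) (diam D / 2)
        rw [hs]; linarith
      have hs0 : 0 < s := lt_trans hiR hs1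
      have hnx : ‖(s:ℂ)‖ = s := by
        rw [Complex.norm_real, Real.norm_eq_abs, abs_of_pos hs0]
      have hx : (s:ℂ) ∈ D := ⟨by rw [hnx]; exact hs1, by rw [hnx]; exact hs2⟩
      have hy : (-(s:ℂ)) ∈ D := by
        have : ‖(-(s:ℂ))‖ = s := by rw [norm_neg, hnx]
        exact ⟨by rw [this]; exact hs1, by rw [this]; exact hs2⟩
      have hdist : dist ((s:ℂ)) (-(s:ℂ)) = 2 * s := by
        rw [dist_eq_norm, sub_neg_eq_add]
        have : (s:ℂ) + (s:ℂ) = ((2*s:ℝ):ℂ) := by push_cast; ring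
        rw [this, Complex.norm_real, Real.norm_eq_abs, abs_of_pos (by linarith)]
      have := Metric.dist_le_diam_of_mem hbdd hx hy
      rw [hdist] at this
      linarith
  set δ := min (r - 1/R) (R - r) with hδ
  have hδ0 : 0 < δ := lt_min (by linarith) (by linarith)
  have hδR : δ < 2 * R := lt_of_le_of_lt (min_le_right _ _) (by linarith)
  have hdens : ∀ θ : ℝ, mDensity D ((r:ℂ) * Complex.exp (θ * Complex.I))
      = 2 * R / (δ * (2 * R - δ)) := by
    intro θ
    have hn : ‖(r:ℂ) * Complex.exp (θ * Complex.I)‖ = r := by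
      rw [norm_mul, Complex.norm_real, Real.norm_eq_abs, abs_of_pos hr0,
        Complex.norm_exp_ofReal_mul_I, mul_one]
    rw [mDensity, hbdist _ hn, hdiam]
  have hlen : mCircleLength D r = 2 * Real.pi * (2 * R / (δ * (2 * R - δ)) * r) := by
    rw [mCircleLength]
    have : ∀ θ : ℝ, mDensity D ((r:ℂ) * Complex.exp (θ * Complex.I)) * r
        = 2 * R / (δ * (2 * R - δ)) * r := fun θ => by rw [hdens θ]
    rw [intervalIntegral.integral_congr (g := fun _ => 2 * R / (δ * (2 * R - δ)) * r)
      (fun θ _ => this θ)]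
    rw [intervalIntegral.integral_const, smul_eq_mul, sub_zero]
  have hRr1 : 0 < R * r - 1 := by
    have := (div_lt_iff₀ hR0).mp hr₁
    nlinarith
  constructor
  · intro h
    have h' : r * (2*R) ≤ 1 + R^2 := (le_div_iff₀ (by positivity)).mp h
    have hmin : δ = r - 1/R := by
      rw [hδ]
      apply min_eq_left
      have e : (1/R) * R = 1 := by field_simp
      nlinarith
    rw [hlen, hmin]
    have h1 : r - 1/R = (R*r - 1)/R := by field_simp
    have h2 : 2*R - (r - 1/R) = (2*R^2 - R*r + 1)/R := by field_simp; ring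
    have h3 : 0 < 2*R^2 - R*r + 1 := by nlinarith
    rw [h2, h1]
    field_simp
    ring
  · intro h
    have h' : 1 + R^2 ≤ r * (2*R) := (div_le_iff₀ (by positivity)).mp h
    have hmin : δ = R - r := by
      rw [hδ]
      apply min_eq_right
      have e : (1/R) * R = 1 := by field_simp
      nlinarith
    rw [hlen, hmin]
    have h3 : 0 < R^2 - r^2 := by nlinarith
    have h2 : 2*R - (R - r) = R + r := by ring
    rw [h2]
    have : (R - r) * (R + r) = R^2 - r^2 := by ring
    rw [this]
    field_simp
    ring
end

section
/- Let R > 0 and 𝔻_R^* = {z ∈ ℂ : 0 < |z| < R}. For any two points z₁, z₂ ∈ 𝔻_R^* with |z₁| = |z₂| = r, one has m_{𝔻_R^*}(z₁, z₂) ≤ 4πR/(2R − r) if 0 < r ≤ R/2, and m_{𝔻_R^*}(z₁, z₂) ≤ 4πRr/(R² − r²) if R/2 ≤ r < R. -/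
open Metric Set

variable {E : Type*} [NormedAddCommGroup E] [NormedSpace ℝ E]

section helpers

variable {R : ℝ}

lemma punc_eq (hR : 0 < R) :
    {z : ℂ | 0 < ‖z‖ ∧ ‖z‖ < R} = Metric.ball (0:ℂ) R \ {0} := by
  ext z
  simp only [mem_setOf_eq, mem_diff, Metric.mem_ball, dist_zero_right, mem_singleton_iff,
    norm_pos_iff]
  tauto

lemma punc_closure (hR : 0 < R) :
    closure {z : ℂ | 0 < ‖z‖ ∧ ‖z‖ < R} = Metric.closedBall (0:ℂ) R := by
  rw [punc_eq hR]
  apply Subset.antisymm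
  · calc closure (Metric.ball (0:ℂ) R \ {0}) ⊆ closure (Metric.ball (0:ℂ) R) :=
          closure_mono diff_subset
      _ = Metric.closedBall (0:ℂ) R := closure_ball 0 hR.ne'
  · have hball : Metric.ball (0:ℂ) R ⊆ closure (Metric.ball (0:ℂ) R \ {0}) := by
      intro z hz
      by_cases h0 : z = 0
      · subst h0
        rw [Metric.mem_closure_iff]
        intro ε hε
        refine ⟨((min ε R)/2 : ℝ), ⟨?_, ?_⟩, ?_⟩
        · rw [Metric.mem_ball, dist_zero_right]
          rw [Complex.norm_real, Real.norm_eq_abs, abs_of_pos (by positivity)]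
          calc min ε R / 2 ≤ R / 2 := by
                have := min_le_right ε R; linarith
            _ < R := by linarith
        · simp only [mem_singleton_iff, Complex.ofReal_eq_zero]
          positivity
        · rw [dist_comm, dist_zero_right, Complex.norm_real, Real.norm_eq_abs,
            abs_of_pos (by positivity)]
          calc min ε R / 2 ≤ ε / 2 := by
                have := min_le_left ε R; linarith
            _ < ε := by linarith
      · exact subset_closure ⟨hz, h0⟩
    calc Metric.closedBall (0:ℂ) R = closure (Metric.ball (0:ℂ) R) := (closure_ball 0 hR.ne').symm
      _ ⊆ closure (closure (Metric.ball (0:ℂ) R \ {0})) := closure_mono hball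
      _ = closure (Metric.ball (0:ℂ) R \ {0}) := closure_closure

lemma punc_isOpen : IsOpen {z : ℂ | 0 < ‖z‖ ∧ ‖z‖ < R} := by
  have : {z : ℂ | 0 < ‖z‖ ∧ ‖z‖ < R} = Metric.ball (0:ℂ) R \ {0} := by
    ext z
    simp only [mem_setOf_eq, mem_diff, Metric.mem_ball, dist_zero_right, mem_singleton_iff,
      norm_pos_iff]
    tauto
  rw [this]
  exact Metric.isOpen_ball.sdiff isClosed_singleton

lemma punc_frontier (hR : 0 < R) :
    frontier {z : ℂ | 0 < ‖z‖ ∧ ‖z‖ < R} = Metric.sphere (0:ℂ) R ∪ {0} := by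
  rw [frontier, punc_closure hR, punc_isOpen.interior_eq]
  ext z
  simp only [mem_diff, Metric.mem_closedBall, dist_zero_right, mem_setOf_eq, mem_union,
    Metric.mem_sphere, mem_singleton_iff, not_and, not_lt]
  constructor
  · rintro ⟨hle, h⟩
    by_cases h0 : z = 0
    · right; exact h0
    · left
      have := h (norm_pos_iff.mpr h0)
      linarith
  · rintro (h | rfl)
    · exact ⟨le_of_eq h, fun _ => le_of_eq h.symm⟩
    · simp [hR.le]

lemma punc_diam (hR : 0 < R) :
    Metric.diam {z : ℂ | 0 < ‖z‖ ∧ ‖z‖ < R} = 2 * R := by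
  have h1 : Metric.diam {z : ℂ | 0 < ‖z‖ ∧ ‖z‖ < R}
      = Metric.diam (Metric.closedBall (0:ℂ) R) := by
    rw [← punc_closure hR, Metric.diam_closure]
  rw [h1]
  apply le_antisymm (Metric.diam_closedBall hR.le)
  have hmem : ((R:ℝ) : ℂ) ∈ Metric.closedBall (0:ℂ) R := by
    simp [Complex.norm_real, Real.norm_eq_abs, abs_of_pos hR]
  have hmem' : ((-R:ℝ) : ℂ) ∈ Metric.closedBall (0:ℂ) R := by
    simp [Complex.norm_real, Real.norm_eq_abs, abs_of_pos hR]
  have h2 := Metric.dist_le_diam_of_mem Metric.isBounded_closedBall hmem hmem'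
  have hd : dist ((R:ℝ) : ℂ) ((-R:ℝ) : ℂ) = 2 * R := by
    rw [dist_eq_norm]
    have h3 : ((R:ℝ) : ℂ) - ((-R:ℝ) : ℂ) = ((2*R : ℝ) : ℂ) := by push_cast; ring
    rw [h3, Complex.norm_real, Real.norm_eq_abs, abs_of_pos (by linarith)]
  linarith [hd ▸ h2]

lemma punc_bdist (hR : 0 < R) {z : ℂ} (hz : z ∈ {z : ℂ | 0 < ‖z‖ ∧ ‖z‖ < R}) :
    bdist {z : ℂ | 0 < ‖z‖ ∧ ‖z‖ < R} z = min ‖z‖ (R - ‖z‖) := by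
  obtain ⟨h0, hz'⟩ := hz
  rw [bdist, punc_frontier hR]
  apply le_antisymm
  · apply le_min
    · have : (0:ℂ) ∈ Metric.sphere (0:ℂ) R ∪ {0} := Or.inr rfl
      simpa [dist_zero_right] using Metric.infDist_le_dist_of_mem this
    · set w : ℂ := (R / ‖z‖) • z with hw
      have hwnorm : ‖w‖ = R := by
        rw [hw, norm_smul, Real.norm_eq_abs, abs_of_pos (by positivity),
          div_mul_cancel₀ _ h0.ne']
      have hwmem : w ∈ Metric.sphere (0:ℂ) R ∪ {0} := Or.inl (by simp [hwnorm])
      have hdist : dist z w = R - ‖z‖ := by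
        rw [dist_eq_norm, hw]
        have : z - (R / ‖z‖) • z = (1 - R / ‖z‖) • z := by
          rw [sub_smul, one_smul]
        rw [this, norm_smul, Real.norm_eq_abs]
        have h1 : (1 : ℝ) ≤ R / ‖z‖ := by
          rw [le_div_iff₀ h0]; linarith
        rw [abs_of_nonpos (by linarith), neg_sub, sub_mul, one_mul,
          div_mul_cancel₀ _ h0.ne']
      calc Metric.infDist z (Metric.sphere (0:ℂ) R ∪ {0}) ≤ dist z w :=
            Metric.infDist_le_dist_of_mem hwmem
        _ = R - ‖z‖ := hdist
  · rw [Metric.infDist_eq_iInf]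
    have hne : Nonempty ((Metric.sphere (0:ℂ) R ∪ {0} : Set ℂ)) := ⟨⟨0, Or.inr rfl⟩⟩
    apply le_ciInf
    rintro ⟨y, hy | hy⟩
    · have hy' : ‖y‖ = R := by simpa using hy
      have : R - ‖z‖ ≤ dist z y := by
        rw [dist_eq_norm]
        have := norm_sub_norm_le y z
        rw [hy'] at this
        calc R - ‖z‖ ≤ ‖y - z‖ := this
          _ = ‖z - y‖ := norm_sub_rev y z
      exact le_trans (min_le_right _ _) this
    · have hy' : y = 0 := hy
      subst hy'
      rw [dist_zero_right]
      exact min_le_left _ _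

end helpers

/-- Corollary: bounds on the $m$-distance between points on a common
circle in the punctured disk $𝔻_R^* = \{0 < |z| < R\}$.
If $|z_1| = |z_2| = r$, then $m_{𝔻_R^*}(z_1,z_2) ≤ 4πR/(2R−r)$ if $0 < r ≤ R/2$, and
$m_{𝔻_R^*}(z_1,z_2) ≤ 4πRr/(R^2−r^2)$ if $R/2 ≤ r < R$. -/
theorem mDist_puncturedDisk_bound (R r : ℝ) (hR : 0 < R)
    (z₁ z₂ : ℂ)
    (hz₁ : z₁ ∈ {z : ℂ | 0 < ‖z‖ ∧ ‖z‖ < R})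
    (hz₂ : z₂ ∈ {z : ℂ | 0 < ‖z‖ ∧ ‖z‖ < R})
    (hr₁ : ‖z₁‖ = r) (hr₂ : ‖z₂‖ = r) :
    (0 < r ∧ r ≤ R / 2 →
      mDist {z : ℂ | 0 < ‖z‖ ∧ ‖z‖ < R} z₁ z₂ ≤ 4 * Real.pi * R / (2 * R - r)) ∧
    (R / 2 ≤ r ∧ r < R →
      mDist {z : ℂ | 0 < ‖z‖ ∧ ‖z‖ < R} z₁ z₂
        ≤ 4 * Real.pi * R * r / (R ^ 2 - r ^ 2)) := by
  set D := {z : ℂ | 0 < ‖z‖ ∧ ‖z‖ < R} with hD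
  have hr0 : 0 < r := hr₁ ▸ hz₁.1
  have hrR : r < R := hr₁ ▸ hz₁.2
  set θ₁ := z₁.arg with hθ₁
  set θ₂ := z₂.arg with hθ₂
  set b := θ₂ - θ₁ with hb_def
  set γ : ℝ → ℂ := fun t => (r : ℂ) * Complex.exp (((θ₁ + t * b : ℝ) : ℂ) * Complex.I)
    with hγ
  -- derivative of γ
  have hderiv : ∀ t : ℝ, HasDerivAt γ
      ((r : ℂ) * (Complex.exp (((θ₁ + t * b : ℝ) : ℂ) * Complex.I) * ((b : ℂ) * Complex.I))) t := by
    intro t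
    have h0 : HasDerivAt (fun t : ℝ => (t : ℂ)) 1 t := by
      simpa using (hasDerivAt_id' t).ofReal_comp
    have h1 : HasDerivAt (fun t : ℝ => ((θ₁ + t * b : ℝ) : ℂ)) (b : ℂ) t := by
      have : (fun t : ℝ => ((θ₁ + t * b : ℝ) : ℂ))
          = fun t : ℝ => (θ₁ : ℂ) + (t : ℂ) * (b : ℂ) := by
        funext u; push_cast; ring
      rw [this]
      simpa using (h0.mul_const (b : ℂ)).const_add (θ₁ : ℂ)
    have h2 : HasDerivAt (fun t : ℝ => ((θ₁ + t * b : ℝ) : ℂ) * Complex.I)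
        ((b : ℂ) * Complex.I) t := h1.mul_const Complex.I
    exact (h2.cexp).const_mul (r : ℂ)
  have hnormderiv : ∀ t : ℝ, ‖deriv γ t‖ = r * |b| := by
    intro t
    rw [(hderiv t).deriv]
    simp only [norm_mul, Complex.norm_real, Complex.norm_I, Real.norm_eq_abs,
      Complex.norm_exp_ofReal_mul_I]
    rw [abs_of_pos hr0]; ring
  have hnormγ : ∀ t : ℝ, ‖γ t‖ = r := by
    intro t
    simp only [hγ, norm_mul, Complex.norm_real, Real.norm_eq_abs,
      Complex.norm_exp_ofReal_mul_I, abs_of_pos hr0, mul_one]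
  have hmemD : ∀ t : ℝ, γ t ∈ D := fun t => ⟨by rw [hnormγ t]; exact hr0, by rw [hnormγ t]; exact hrR⟩
  -- the path is rectifiable and goes from z₁ to z₂
  have hrect : IsRectPathIn D z₁ z₂ γ := by
    refine ⟨⟨(r * |b|).toNNReal, ?_⟩, ?_, ?_, fun t _ => hmemD t⟩
    · apply lipschitzWith_of_nnnorm_deriv_le (fun t => (hderiv t).differentiableAt)
      intro x
      rw [← norm_toNNReal]
      exact Real.toNNReal_mono (le_of_eq (hnormderiv x))
    · show (r : ℂ) * Complex.exp (((θ₁ + 0 * b : ℝ) : ℂ) * Complex.I) = z₁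
      rw [show (θ₁ + 0 * b : ℝ) = θ₁ by ring, ← hr₁]
      exact Complex.norm_mul_exp_arg_mul_I z₁
    · show (r : ℂ) * Complex.exp (((θ₁ + 1 * b : ℝ) : ℂ) * Complex.I) = z₂
      rw [show (θ₁ + 1 * b : ℝ) = θ₂ by rw [hb_def]; ring, ← hr₂]
      exact Complex.norm_mul_exp_arg_mul_I z₂
  set δ := min r (R - r) with hδ
  set C0 := 2 * R / (δ * (2 * R - δ)) with hC0
  have hδpos : 0 < δ := lt_min hr0 (by linarith)
  have hδlt : δ < 2 * R := lt_of_le_of_lt (min_le_left _ _) (by linarith)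
  have hC0nonneg : 0 ≤ C0 := div_nonneg (by linarith) (mul_nonneg hδpos.le (by linarith))
  -- value of the integral along γ
  have hdens : ∀ t : ℝ, mDensity D (γ t) = C0 := by
    intro t
    rw [mDensity, hD, punc_diam hR, punc_bdist hR (hD ▸ hmemD t), hnormγ t, ← hδ, hC0]
  have hval : pathIntegral (mDensity D) γ = C0 * (r * |b|) := by
    show (∫ t in (0:ℝ)..1, mDensity D (γ t) * ‖deriv γ t‖) = C0 * (r * |b|)
    have : ∀ t : ℝ, mDensity D (γ t) * ‖deriv γ t‖ = C0 * (r * |b|) := fun t => by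
      rw [hdens t, hnormderiv t]
    simp only [this, intervalIntegral.integral_const, smul_eq_mul, sub_zero, one_mul]
  -- nonnegativity / bddBelow
  have hdens_nonneg : ∀ z ∈ D, 0 ≤ mDensity D z := by
    intro z hz
    rw [mDensity, hD, punc_diam hR, punc_bdist hR (hD ▸ hz)]
    have h1 : 0 < min ‖z‖ (R - ‖z‖) := lt_min hz.1 (by linarith [hz.2])
    have h2 : min ‖z‖ (R - ‖z‖) < 2 * R := lt_of_le_of_lt (min_le_left _ _) (by linarith [hz.2])
    exact div_nonneg (by linarith) (mul_nonneg h1.le (by linarith))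
  have hbdd : BddBelow (pathIntegral (mDensity D) '' {γ | IsRectPathIn D z₁ z₂ γ}) := by
    refine ⟨0, ?_⟩
    rintro x ⟨γ', hγ', rfl⟩
    apply intervalIntegral.integral_nonneg zero_le_one
    intro u hu
    exact mul_nonneg (hdens_nonneg _ (hγ'.2.2.2 u hu)) (norm_nonneg _)
  have hmain : mDist D z₁ z₂ ≤ C0 * (r * |b|) := by
    rw [mDist, pathDist, ← hval]
    exact csInf_le hbdd ⟨γ, hrect, rfl⟩
  -- |b| ≤ 2π
  have hbabs : |b| ≤ 2 * Real.pi := by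
    have h1 := Complex.arg_le_pi z₁
    have h2 := Complex.neg_pi_lt_arg z₁
    have h3 := Complex.arg_le_pi z₂
    have h4 := Complex.neg_pi_lt_arg z₂
    rw [abs_le]; constructor <;> [skip; skip] <;> · rw [hb_def, hθ₁, hθ₂]; linarith
  have hkey : mDist D z₁ z₂ ≤ C0 * (r * (2 * Real.pi)) :=
    le_trans hmain (mul_le_mul_of_nonneg_left
      (mul_le_mul_of_nonneg_left hbabs hr0.le) hC0nonneg)
  constructor
  · rintro ⟨h1, h2⟩
    have hmin : δ = r := min_eq_left (by linarith)
    have heq : C0 * (r * (2 * Real.pi)) = 4 * Real.pi * R / (2 * R - r) := by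
      rw [hC0, hmin]
      have hne1 : r ≠ 0 := hr0.ne'
      have hne2 : (2 * R - r) ≠ 0 := ne_of_gt (by linarith)
      field_simp
      ring
    rw [heq] at hkey
    exact hkey
  · rintro ⟨h1, h2⟩
    have hmin : δ = R - r := min_eq_right (by linarith)
    have heq : C0 * (r * (2 * Real.pi)) = 4 * Real.pi * R * r / (R ^ 2 - r ^ 2) := by
      rw [hC0, hmin]
      have hne1 : (R - r) ≠ 0 := by linarith
      have hne2 : (R + r) ≠ 0 := by linarith
      have h3 : R ^ 2 - r ^ 2 = (R - r) * (R + r) := by ring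
      have h4 : 2 * R - (R - r) = R + r := by ring
      rw [h4, h3]
      field_simp
      ring
    rw [heq] at hkey
    exact hkey
end
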